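/- arXiv:1604.03154 — 6 statements merged into one kernel-verified Lean document; each statement's English description precedes it below -/
import Mathlib

section
/- Let d be a distance on a set X that has a ≤^d-maximum element 1 (i.e. d(x,1) = 0 for all x ∈ X), let Q be a set, and equip X^Q with the supremum distance sup-d. Then for any net (f_λ) in X^Q and f ∈ X^Q: f_λ(p) →^◦ f(p) for every p ∈ Q if and only if f_λ →^◦ f with respect to sup-d. -/
open TopologicalSpace ENNReal

/-- A (possibly non-reflexive) transitive relation, used to index nets. -/
def TransRel {ι : Type} (r : ι → ι → Prop) : Prop := ∀ a b c, r a b → r b c → r a c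

/-- Directedness of the index relation of a net. -/
def DirRel {ι : Type} (r : ι → ι → Prop) : Prop := ∀ a b, ∃ c, r a c ∧ r b c

/-- `liminf` of a net of extended nonnegative reals over a directed index:
`sup_γ inf_{γ ≺ δ} a δ`. -/
noncomputable def liminfN {ι : Type} (r : ι → ι → Prop) (a : ι → ℝ≥0∞) : ℝ≥0∞ :=
  ⨆ γ, ⨅ δ, ⨅ _ : r γ δ, a δ

/-- `limsup` of a net of extended nonnegative reals over a directed index:
`inf_γ sup_{γ ≺ δ} a δ`. -/
noncomputable def limsupN {ι : Type} (r : ι → ι → Prop) (a : ι → ℝ≥0∞) : ℝ≥0∞ :=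
  ⨅ γ, ⨆ δ, ⨆ _ : r γ δ, a δ

/-- Convergence of a net in `ℝ≥0∞` to `L`. -/
def TendstoN {ι : Type} (r : ι → ι → Prop) (a : ι → ℝ≥0∞) (L : ℝ≥0∞) : Prop :=
  liminfN r a = L ∧ limsupN r a = L

/-- Convergence of a real-valued net. -/
def TendstoRN {ι : Type} (r : ι → ι → Prop) (a : ι → ℝ) (L : ℝ) : Prop :=
  ∀ ε : ℝ, 0 < ε → ∃ γ₀, ∀ γ, r γ₀ γ → |a γ - L| < ε

/-- A distance: a `[0,∞]`-valued function satisfying the triangle inequality. -/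
def IsDistance {X : Type} (d : X → X → ℝ≥0∞) : Prop :=
  ∀ x y z, d x z ≤ d x y + d y z

/-- `d`-Cauchy net: `lim_γ sup_{γ ≺ δ} d(x_γ, x_δ) = 0`. -/
def DCauchyN {ι X : Type} (r : ι → ι → Prop) (d : X → X → ℝ≥0∞) (x : ι → X) : Prop :=
  ∀ ε : ℝ≥0∞, 0 < ε → ∃ γ₀, ∀ γ δ, r γ₀ γ → r γ δ → d (x γ) (x δ) < ε

/-- `d`-dominating net: `sup_γ lim_{γ ≺ δ} d(x_γ, x_δ) = 0`. -/
def DDomN {ι X : Type} (r : ι → ι → Prop) (d : X → X → ℝ≥0∞) (x : ι → X) : Prop :=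
  ∀ γ, ∀ ε : ℝ≥0∞, 0 < ε → ∃ δ₀, r γ δ₀ ∧ ∀ δ, r δ₀ δ → d (x γ) (x δ) < ε

/-- `x_λ →^◦ l` with holes tested against points of `T`:
`liminf_λ d(x_λ, c) ≥ d(l, c)` for all `c ∈ T`. -/
def UpperConvOn {ι X : Type} (r : ι → ι → Prop) (d : X → X → ℝ≥0∞) (T : Set X)
    (x : ι → X) (l : X) : Prop :=
  ∀ c ∈ T, d l c ≤ liminfN r fun γ => d (x γ) c

/-- `x_λ →_◦ l` with holes tested against points of `T`:
`liminf_λ d(c, x_λ) ≥ d(c, l)` for all `c ∈ T`. -/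
def LowerConvOn {ι X : Type} (r : ι → ι → Prop) (d : X → X → ℝ≥0∞) (T : Set X)
    (x : ι → X) (l : X) : Prop :=
  ∀ c ∈ T, d c l ≤ liminfN r fun γ => d c (x γ)

/-- `x_λ →^◦_◦ l` with holes tested against points of `T`. -/
def BiConvOn {ι X : Type} (r : ι → ι → Prop) (d : X → X → ℝ≥0∞) (T : Set X)
    (x : ι → X) (l : X) : Prop :=
  UpperConvOn r d T x l ∧ LowerConvOn r d T x l

/-- The supremum distance on functions `Q → X`. -/
noncomputable def supD {Q X : Type} (d : X → X → ℝ≥0∞) (f g : Q → X) : ℝ≥0∞ :=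
  ⨆ p, d (f p) (g p)

/-- The upper ball topology `X^•`, generated by the balls `{x | d c x < ε}`. -/
def upperBallTop {X : Type} (d : X → X → ℝ≥0∞) : TopologicalSpace X :=
  TopologicalSpace.generateFrom {s | ∃ c, ∃ ε : ℝ≥0∞, 0 < ε ∧ s = {x | d c x < ε}}

/-- The lower ball topology `X_•`, generated by the balls `{x | d x c < ε}`. -/
def lowerBallTop {X : Type} (d : X → X → ℝ≥0∞) : TopologicalSpace X :=
  TopologicalSpace.generateFrom {s | ∃ c, ∃ ε : ℝ≥0∞, 0 < ε ∧ s = {x | d x c < ε}}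

/-- `X` is `d`-complete: every `d`-Cauchy net has a `→^◦_◦`-limit. -/
def DComplete {X : Type} (d : X → X → ℝ≥0∞) : Prop :=
  ∀ (ι : Type) (r : ι → ι → Prop) (x : ι → X), Nonempty ι → TransRel r → DirRel r →
    DCauchyN r d x → ∃ l, BiConvOn r d Set.univ x l

/-- `y` is `d`-finite: `d(y, x_λ) → d(y, l)` whenever `(x_λ)` is `d`-Cauchy and
`x_λ →^◦_◦ l`. -/
def DFinite {X : Type} (d : X → X → ℝ≥0∞) (y : X) : Prop :=
  ∀ (ι : Type) (r : ι → ι → Prop) (x : ι → X) (l : X), Nonempty ι → TransRel r → DirRel r →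
    DCauchyN r d x → BiConvOn r d Set.univ x l →
      TendstoN r (fun γ => d y (x γ)) (d y l)

/-- The `d`-finite topology `X^{F•}`, generated by upper balls with `d`-finite centres. -/
def dFiniteTop {X : Type} (d : X → X → ℝ≥0∞) : TopologicalSpace X :=
  TopologicalSpace.generateFrom
    {s | ∃ c, DFinite d c ∧ ∃ ε : ℝ≥0∞, 0 < ε ∧ s = {x | d c x < ε}}

/-- If `X` has a `≤^d`-maximum, then `f_λ(p) →^◦ f(p)` for every `p ∈ Q`
iff `f_λ →^◦ f` with respect to the supremum distance. -/
theorem stmt1 {X Q ι : Type} (d : X → X → ℝ≥0∞) (hd : IsDistance d)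
    (one : X) (hone : ∀ x, d x one = 0)
    (r : ι → ι → Prop) (hne : Nonempty ι) (htr : TransRel r) (hdir : DirRel r)
    (f : ι → Q → X) (g : Q → X) :
    (∀ p, UpperConvOn r d Set.univ (fun i => f i p) (g p)) ↔
      UpperConvOn r (supD d) Set.univ f g := by
  classical
  constructor
  · intro h c _
    refine iSup_le fun p => ?_
    calc d (g p) (c p) ≤ liminfN r fun γ => d (f γ p) (c p) := h p (c p) trivial
      _ ≤ liminfN r fun γ => supD d (f γ) c := by
          refine iSup_mono fun γ => iInf_mono fun δ => iInf_mono fun _ => ?_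
          exact le_iSup (fun q => d (f δ q) (c q)) p
  · intro h p c _
    set c' : Q → X := fun q => if q = p then c else one with hc'
    have key : ∀ h0 : Q → X, supD d h0 c' = d (h0 p) c := by
      intro h0
      apply le_antisymm
      · refine iSup_le fun q => ?_
        by_cases hq : q = p
        · subst hq; simp [c']
        · simp [c', hq, hone]
      · have := le_iSup (fun q => d (h0 q) (c' q)) p
        simpa [c', supD] using this
    have h2 := h c' trivial
    rw [key g] at h2
    refine h2.trans (le_of_eq ?_)
    have : (fun γ => supD d (f γ) c') = fun γ => d (f γ p) c := funext fun γ => key (f γ)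
    rw [this]
end

section
/- Generalized Dini theorem: Let d be a distance on a set X, let Q be a compact topological space, let f : Q → X be continuous with respect to the lower-ball topology X_•, and let (g_λ) be a sup-d-Cauchy net of functions Q → X, each continuous with respect to the upper-ball topology X^•. Then for each p ∈ Q the limit lim_λ d(f(p), g_λ(p)) exists in [0,∞], and lim_λ sup_{p∈Q} d(f(p), g_λ(p)) = sup_{p∈Q} lim_λ d(f(p), g_λ(p)). -/
open TopologicalSpace ENNReal

private lemma finUB' {ι : Type} {r : ι → ι → Prop} (htr : TransRel r) (hdir : DirRel r)
    (γ₀ : ι) (s : Finset ι) : ∃ γ, r γ₀ γ ∧ ∀ β ∈ s, r β γ := by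
  classical
  induction s using Finset.induction_on with
  | empty =>
      obtain ⟨c, hc, -⟩ := hdir γ₀ γ₀
      exact ⟨c, hc, fun β hβ => absurd hβ (by simp)⟩
  | @insert a s ha ih =>
      obtain ⟨γ, h0, hs⟩ := ih
      obtain ⟨γ', h1, h2⟩ := hdir a γ
      refine ⟨γ', htr _ _ _ h0 h2, fun β hβ => ?_⟩
      rcases Finset.mem_insert.1 hβ with rfl | hβ
      · exact h1
      · exact htr _ _ _ (hs β hβ) h2

private lemma liminf_le_limsupN' {ι : Type} {r : ι → ι → Prop}
    (hdir : DirRel r) (a : ι → ℝ≥0∞) :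
    liminfN r a ≤ limsupN r a := by
  refine iSup_le fun β => le_iInf fun γ => ?_
  obtain ⟨δ, hβδ, hγδ⟩ := hdir β γ
  calc (⨅ δ', ⨅ _ : r β δ', a δ') ≤ a δ := iInf₂_le δ hβδ
    _ ≤ ⨆ δ', ⨆ _ : r γ δ', a δ' := le_iSup₂ (f := fun δ' (_ : r γ δ') => a δ') δ hγδ

private lemma tendsto_of_cauchyN' {ι : Type} {r : ι → ι → Prop}
    (htr : TransRel r) (hdir : DirRel r) (a : ι → ℝ≥0∞)
    (h : ∀ ε : ℝ≥0∞, 0 < ε → ∃ γ₀, ∀ γ δ, r γ₀ γ → r γ δ → a δ ≤ a γ + ε) :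
    TendstoN r a (limsupN r a) := by
  refine ⟨le_antisymm (liminf_le_limsupN' hdir a) ?_, rfl⟩
  refine ENNReal.le_of_forall_pos_le_add fun ε hε hfin => ?_
  have hε2 : (0 : ℝ≥0∞) < (ε : ℝ≥0∞) / 2 := by
    refine ENNReal.div_pos_iff.2 ⟨by exact_mod_cast hε.ne', by norm_num⟩
  obtain ⟨γ₀, hγ₀⟩ := h ((ε : ℝ≥0∞) / 2) hε2
  set m : ℝ≥0∞ := ⨅ δ, ⨅ _ : r γ₀ δ, a δ with hm
  have hmle : m ≤ liminfN r a := le_iSup (fun γ => ⨅ δ, ⨅ _ : r γ δ, a δ) γ₀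
  have hmfin : m < ⊤ := lt_of_le_of_lt hmle hfin
  have hlt : m < m + (ε : ℝ≥0∞) / 2 := ENNReal.lt_add_right hmfin.ne hε2.ne'
  obtain ⟨δ, hδ⟩ := iInf_lt_iff.1 hlt
  obtain ⟨hγ₀δ, hδ2⟩ : r γ₀ δ ∧ a δ < m + (ε : ℝ≥0∞) / 2 := by
    by_cases hr : r γ₀ δ
    · exact ⟨hr, by simpa [hr] using hδ⟩
    · simp [hr] at hδ
  have h1 : limsupN r a ≤ ⨆ δ', ⨆ _ : r δ δ', a δ' :=
    iInf_le (fun γ => ⨆ δ', ⨆ _ : r γ δ', a δ') δ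
  have h2 : (⨆ δ', ⨆ _ : r δ δ', a δ') ≤ a δ + (ε : ℝ≥0∞) / 2 :=
    iSup₂_le fun δ' hδ' => hγ₀ δ δ' hγ₀δ hδ'
  calc limsupN r a ≤ a δ + (ε : ℝ≥0∞) / 2 := le_trans h1 h2
    _ ≤ (m + (ε : ℝ≥0∞) / 2) + (ε : ℝ≥0∞) / 2 := add_le_add_left hδ2.le _
    _ = m + ((ε : ℝ≥0∞) / 2 + (ε : ℝ≥0∞) / 2) := by rw [add_assoc]
    _ = m + ε := by rw [ENNReal.add_halves]
    _ ≤ liminfN r a + ε := add_le_add_left hmle _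

private lemma lowerBall_open' {Q X : Type} [TopologicalSpace Q] {d : X → X → ℝ≥0∞} {f : Q → X}
    (hf : @Continuous Q X _ (lowerBallTop d) f) (c : X) {ρ : ℝ≥0∞} (hρ : 0 < ρ) :
    IsOpen {q | d (f q) c < ρ} := by
  have hball : @IsOpen X (lowerBallTop d) {x | d x c < ρ} :=
    @TopologicalSpace.isOpen_generateFrom_of_mem X _ _ ⟨c, ρ, hρ, rfl⟩
  exact @Continuous.isOpen_preimage Q X _ (lowerBallTop d) f hf _ hball

private lemma upperBall_open' {Q X : Type} [TopologicalSpace Q] {d : X → X → ℝ≥0∞} {h : Q → X}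
    (hh : @Continuous Q X _ (upperBallTop d) h) (c : X) {ρ : ℝ≥0∞} (hρ : 0 < ρ) :
    IsOpen {q | d c (h q) < ρ} := by
  have hball : @IsOpen X (upperBallTop d) {x | d c x < ρ} :=
    @TopologicalSpace.isOpen_generateFrom_of_mem X _ _ ⟨c, ρ, hρ, rfl⟩
  exact @Continuous.isOpen_preimage Q X _ (upperBallTop d) h hh _ hball

/-- generalized Dini theorem: if `Q` is compact, `f : Q → X` is
`X_•`-continuous and `(g_λ)` is a `sup-d`-Cauchy net of `X^•`-continuous functions, then
each pointwise limit `lim_λ d(f(p), g_λ(p))` exists and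
`lim_λ sup_p d(f(p), g_λ(p)) = sup_p lim_λ d(f(p), g_λ(p))`. -/
theorem stmt2 {X Q ι : Type} [TopologicalSpace Q] [CompactSpace Q]
    (d : X → X → ℝ≥0∞) (hd : IsDistance d)
    (r : ι → ι → Prop) (hne : Nonempty ι) (htr : TransRel r) (hdir : DirRel r)
    (f : Q → X) (hf : @Continuous Q X _ (lowerBallTop d) f)
    (g : ι → Q → X) (hg : ∀ i, @Continuous Q X _ (upperBallTop d) (g i))
    (hC : DCauchyN r (supD d) g) :
    ∃ L : Q → ℝ≥0∞,
      (∀ p, TendstoN r (fun i => d (f p) (g i p)) (L p)) ∧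
      TendstoN r (fun i => ⨆ p, d (f p) (g i p)) (⨆ p, L p) := by
  classical
  -- one-sided Cauchy transfer
  have hstep : ∀ ε : ℝ≥0∞, 0 < ε → ∃ γ₀, ∀ γ δ, r γ₀ γ → r γ δ →
      ∀ p, d (f p) (g δ p) ≤ d (f p) (g γ p) + ε := by
    intro ε hε
    obtain ⟨γ₀, hγ₀⟩ := hC ε hε
    refine ⟨γ₀, fun γ δ h1 h2 p => ?_⟩
    have h3 : d (g γ p) (g δ p) ≤ ε :=
      le_of_lt (lt_of_le_of_lt (le_iSup (fun q => d (g γ q) (g δ q)) p) (hγ₀ γ δ h1 h2))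
    exact le_trans (hd (f p) (g γ p) (g δ p)) (add_le_add_right h3 _)
  -- pointwise limits
  have hpt : ∀ p, TendstoN r (fun i => d (f p) (g i p))
      (limsupN r (fun i => d (f p) (g i p))) := by
    intro p
    refine tendsto_of_cauchyN' htr hdir _ fun ε hε => ?_
    obtain ⟨γ₀, h⟩ := hstep ε hε
    exact ⟨γ₀, fun γ δ h1 h2 => h γ δ h1 h2 p⟩
  set L : Q → ℝ≥0∞ := fun p => limsupN r (fun i => d (f p) (g i p)) with hL
  set Snet : ι → ℝ≥0∞ := fun i => ⨆ p, d (f p) (g i p) with hSnet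
  have hStend : TendstoN r Snet (limsupN r Snet) := by
    refine tendsto_of_cauchyN' htr hdir _ fun ε hε => ?_
    obtain ⟨γ₀, h⟩ := hstep ε hε
    refine ⟨γ₀, fun γ δ h1 h2 => iSup_le fun p => le_trans (h γ δ h1 h2 p) ?_⟩
    exact add_le_add_left (le_iSup (fun q => d (f q) (g γ q)) p) ε
  have hSM : (⨆ p, L p) ≤ limsupN r Snet := by
    refine iSup_le fun p => ?_
    have h1 : liminfN r (fun i => d (f p) (g i p)) = L p := (hpt p).1
    have h2 : liminfN r (fun i => d (f p) (g i p)) ≤ liminfN r Snet :=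
      iSup_mono fun γ => iInf_mono fun δ => iInf_mono fun _ =>
        le_iSup (fun q => d (f q) (g δ q)) p
    rw [← h1]
    exact le_trans h2 (le_of_eq hStend.1)
  have hMS : limsupN r Snet ≤ ⨆ p, L p := by
    refine ENNReal.le_of_forall_pos_le_add fun ε hε hfin => ?_
    set SS : ℝ≥0∞ := ⨆ p, L p with hSS
    set ε' : ℝ≥0∞ := (ε : ℝ≥0∞) / 3 with hε'
    have hε'pos : 0 < ε' := by
      refine ENNReal.div_pos_iff.2 ⟨by exact_mod_cast hε.ne', by norm_num⟩
    obtain ⟨γ₀, hγ₀⟩ := hC ε' hε'pos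
    have hCau : ∀ γ δ q, r γ₀ γ → r γ δ → d (g γ q) (g δ q) < ε' := fun γ δ q h1 h2 =>
      lt_of_le_of_lt (le_iSup (fun q' => d (g γ q') (g δ q')) q) (hγ₀ γ δ h1 h2)
    have hpoint : ∀ p : Q, ∃ γp : ι, r γ₀ γp ∧ ∃ U : Set Q, IsOpen U ∧ p ∈ U ∧
        ∀ q ∈ U, d (f q) (g γp q) ≤ SS + ε' + ε' := by
      intro p
      have hLp : L p < SS + ε' :=
        lt_of_le_of_lt (le_iSup L p) (ENNReal.lt_add_right hfin.ne hε'pos.ne')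
      have hLp2 : (⨅ γ, ⨆ δ, ⨆ _ : r γ δ, d (f p) (g δ p)) < SS + ε' := hLp
      obtain ⟨γ', hγ'⟩ := iInf_lt_iff.1 hLp2
      obtain ⟨β, hγ'β, hγ₀β⟩ := hdir γ' γ₀
      have hβ : d (f p) (g β p) < SS + ε' :=
        lt_of_le_of_lt (le_iSup₂ (f := fun δ (_ : r γ' δ) => d (f p) (g δ p)) β hγ'β) hγ'
      obtain ⟨γp, hβγp, -⟩ := hdir β β
      have hγ₀γp : r γ₀ γp := htr _ _ _ hγ₀β hβγp
      have hβp : d (g β p) (g γp p) < ε' := hCau β γp p hγ₀β hβγp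
      have hU1 : IsOpen {q | d (f q) (g β p) < SS + ε'} :=
        lowerBall_open' hf (g β p) (lt_of_lt_of_le hε'pos le_add_self)
      have hU2 : IsOpen {q | d (g β p) (g γp q) < ε'} :=
        upperBall_open' (hg γp) (g β p) hε'pos
      refine ⟨γp, hγ₀γp, {q | d (f q) (g β p) < SS + ε'} ∩ {q | d (g β p) (g γp q) < ε'},
        hU1.inter hU2, ⟨hβ, hβp⟩, fun q hq => ?_⟩
      calc d (f q) (g γp q) ≤ d (f q) (g β p) + d (g β p) (g γp q) := hd _ _ _
        _ ≤ (SS + ε') + ε' := add_le_add hq.1.le hq.2.le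
    choose γp hγp U hUopen hUmem hUprop using hpoint
    have hcover : (Set.univ : Set Q) ⊆ ⋃ p, U p :=
      fun q _ => Set.mem_iUnion.2 ⟨q, hUmem q⟩
    obtain ⟨t, ht⟩ := isCompact_univ.elim_finite_subcover U hUopen hcover
    obtain ⟨γs, hγ₀γs, hγs⟩ := finUB' htr hdir γ₀ (t.image γp)
    have hfinal : ∀ δ, r γs δ → Snet δ ≤ SS + (ε : ℝ≥0∞) := by
      intro δ hδ
      refine iSup_le fun q => ?_
      obtain ⟨p, hpt', hq⟩ := Set.mem_iUnion₂.1 (ht (Set.mem_univ q))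
      have h1 : d (f q) (g (γp p) q) ≤ SS + ε' + ε' := hUprop p q hq
      have h2 : r (γp p) δ := htr _ _ _ (hγs _ (Finset.mem_image_of_mem γp hpt')) hδ
      have h3 : d (g (γp p) q) (g δ q) ≤ ε' := (hCau _ _ _ (hγp p) h2).le
      calc d (f q) (g δ q) ≤ d (f q) (g (γp p) q) + d (g (γp p) q) (g δ q) := hd _ _ _
        _ ≤ (SS + ε' + ε') + ε' := add_le_add h1 h3
        _ = SS + (ε' + ε' + ε') := by rw [add_assoc, add_assoc, add_assoc]
        _ = SS + ε := by rw [hε', ENNReal.add_thirds]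
    exact le_trans (iInf_le (fun γ => ⨆ δ, ⨆ _ : r γ δ, Snet δ) γs) (iSup₂_le hfinal)
  have hM : limsupN r Snet = ⨆ p, L p := le_antisymm hMS hSM
  exact ⟨L, hpt, hM ▸ hStend⟩
end

section
/- If d is a distance on a set X and X is d-complete, then for any topological space Q the set C(Q, X^{F•}) of functions from Q to X that are continuous with respect to the d-finite topology X^{F•} is sup-d-complete: every sup-d-Cauchy net in C(Q, X^{F•}) has a →^◦_◦-limit (with respect to sup-d, holes tested against all functions Q → X) lying in C(Q, X^{F•}). -/
open TopologicalSpace ENNReal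

lemma liminfN_mono {ι : Type} {r : ι → ι → Prop} {a b : ι → ℝ≥0∞}
    (h : ∀ γ, a γ ≤ b γ) : liminfN r a ≤ liminfN r b :=
  iSup_mono fun γ => iInf_mono fun δ => iInf_mono fun _ => h δ

lemma liminfN_le_of_tail {ι : Type} {r : ι → ι → Prop} (hdir : DirRel r)
    {a : ι → ℝ≥0∞} {γ : ι} {M : ℝ≥0∞} (h : ∀ δ, r γ δ → a δ ≤ M) :
    liminfN r a ≤ M := by
  refine iSup_le fun β => ?_
  obtain ⟨δ, h1, h2⟩ := hdir β γ
  exact le_trans (iInf₂_le δ h1) (h δ h2)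

/-- if `X` is `d`-complete, then `C(Q, X^{F•})` is `sup-d`-complete: every
`sup-d`-Cauchy net of functions continuous for the `d`-finite topology has a
`→^◦_◦`-limit which is continuous for the `d`-finite topology. -/
theorem stmt3 {X Q ι : Type} [TopologicalSpace Q]
    (d : X → X → ℝ≥0∞) (hd : IsDistance d) (hcomp : DComplete d)
    (r : ι → ι → Prop) (hne : Nonempty ι) (htr : TransRel r) (hdir : DirRel r)
    (f : ι → Q → X) (hf : ∀ i, @Continuous Q X _ (dFiniteTop d) (f i))
    (hC : DCauchyN r (supD d) f) :
    ∃ g : Q → X, @Continuous Q X _ (dFiniteTop d) g ∧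
      BiConvOn r (supD d) Set.univ f g := by
  classical
  have hptC : ∀ p, DCauchyN r d (fun γ => f γ p) := by
    intro p ε hε
    obtain ⟨γ₀, h⟩ := hC ε hε
    exact ⟨γ₀, fun γ δ h1 h2 =>
      lt_of_le_of_lt (le_iSup (fun q => d (f γ q) (f δ q)) p) (h γ δ h1 h2)⟩
  choose g hg using fun p => hcomp ι r (fun γ => f γ p) hne htr hdir (hptC p)
  refine ⟨g, ?_, ?_, ?_⟩
  · -- continuity
    refine continuous_generateFrom_iff.mpr ?_
    rintro s ⟨c, hcfin, ε, hε, rfl⟩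
    rw [isOpen_iff_forall_mem_open]
    intro p₀ hp₀
    simp only [Set.mem_preimage, Set.mem_setOf_eq] at hp₀
    set a := d c (g p₀) with ha
    obtain ⟨b, hab, hbε⟩ := exists_between hp₀
    obtain ⟨b', hbb', hb'ε⟩ := exists_between hbε
    set η := min (b - a) (b' - b) with hηdef
    have hη : 0 < η := lt_min (tsub_pos_of_lt hab) (tsub_pos_of_lt hbb')
    have hsum : a + η + η ≤ b' := by
      calc a + η + η ≤ a + (b - a) + (b' - b) := by
            gcongr
            exacts [min_le_left _ _, min_le_right _ _]
        _ = b + (b' - b) := by rw [add_tsub_cancel_of_le hab.le]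
        _ = b' := add_tsub_cancel_of_le hbb'.le
    have htend := hcfin ι r (fun δ => f δ p₀) (g p₀) hne htr hdir (hptC p₀) (hg p₀)
    have haε : limsupN r (fun δ => d c (f δ p₀)) < a + η := by
      rw [htend.2]
      exact ENNReal.lt_add_right (ne_top_of_lt hp₀) hη.ne'
    rw [limsupN] at haε
    obtain ⟨β, hβ⟩ := iInf_lt_iff.mp haε
    obtain ⟨γ₀, hγ₀⟩ := hC η hη
    obtain ⟨γ, hγ1, hγ2⟩ := hdir γ₀ β
    have hfγp₀ : d c (f γ p₀) < a + η :=
      lt_of_le_of_lt (le_iSup_of_le γ (le_iSup (fun _ => d c (f γ p₀)) hγ2)) hβ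
    have hA : ∀ p, d c (g p) ≤ d c (f γ p) + η := by
      intro p
      refine le_trans ((hg p).2 c (Set.mem_univ _)) (liminfN_le_of_tail hdir (γ := γ) ?_)
      intro δ hγδ
      calc d c (f δ p) ≤ d c (f γ p) + d (f γ p) (f δ p) := hd _ _ _
        _ ≤ d c (f γ p) + η := by
            gcongr
            exact le_of_lt (lt_of_le_of_lt
              (le_iSup (fun q => d (f γ q) (f δ q)) p) (hγ₀ γ δ hγ1 hγδ))
    refine ⟨f γ ⁻¹' {x | d c x < a + η}, ?_, ?_, hfγp₀⟩
    · intro p hp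
      simp only [Set.mem_preimage, Set.mem_setOf_eq] at hp ⊢
      calc d c (g p) ≤ d c (f γ p) + η := hA p
        _ ≤ (a + η) + η := add_le_add_left hp.le η
        _ ≤ b' := hsum
        _ < ε := hb'ε
    · have hop : @IsOpen X (dFiniteTop d) {x | d c x < a + η} := by
        apply TopologicalSpace.isOpen_generateFrom_of_mem
        exact ⟨c, hcfin, a + η, lt_of_lt_of_le hη le_add_self, rfl⟩
      exact @Continuous.isOpen_preimage Q X _ (dFiniteTop d) (f γ) (hf γ) _ hop
  · -- upper
    intro c _
    refine iSup_le fun p => ?_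
    exact le_trans ((hg p).1 (c p) (Set.mem_univ _))
      (liminfN_mono fun γ => le_iSup (fun q => d (f γ q) (c q)) p)
  · -- lower
    intro c _
    refine iSup_le fun p => ?_
    exact le_trans ((hg p).2 (c p) (Set.mem_univ _))
      (liminfN_mono fun γ => le_iSup (fun q => d (c q) (f γ q)) p)
end

section
/- Let d be a distance on a set X and Y ⊆ X with X = Y^C, i.e. every x ∈ X is a →^◦_◦-limit of some d-Cauchy net in Y. Suppose that d(y, x_λ) → d(y, x) whenever y ∈ Y, (x_λ) is a d-Cauchy net with terms in Y, and x_λ →^◦_◦ x ∈ X. Then every element of Y is d-finite in X, and consequently X is d-algebraic: every x ∈ X is a →^◦_◦-limit of a d-Cauchy net of d-finite elements of X. -/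
open TopologicalSpace ENNReal

section Aux

variable {ι X : Type}

lemma listUB {r : ι → ι → Prop} (htr : TransRel r) (hdir : DirRel r) (hne : Nonempty ι) :
    ∀ L : List ι, ∃ i, ∀ a ∈ L, r a i := by
  intro L
  induction L with
  | nil => exact ⟨Classical.arbitrary ι, by simp⟩
  | cons a L ih =>
    obtain ⟨i, hi⟩ := ih
    obtain ⟨j, hj1, hj2⟩ := hdir a i
    refine ⟨j, ?_⟩
    intro b hb
    rcases List.mem_cons.1 hb with h | h
    · exact h ▸ hj1
    · exact htr _ _ _ (hi b h) hj2

lemma liminfN_le_limsupN {r : ι → ι → Prop} (hdir : DirRel r) (a : ι → ℝ≥0∞) :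
    liminfN r a ≤ limsupN r a := by
  refine iSup_le fun γ => le_iInf fun γ' => ?_
  obtain ⟨δ, h1, h2⟩ := hdir γ γ'
  calc (⨅ δ', ⨅ _ : r γ δ', a δ') ≤ a δ := iInf₂_le δ h1
  _ ≤ ⨆ δ', ⨆ _ : r γ' δ', a δ' := le_iSup_of_le δ (le_iSup (fun _ : r γ' δ => a δ) h2)

lemma le_of_forall_gt' {a b : ℝ≥0∞} (h : ∀ q, b < q → a ≤ q) : a ≤ b := by
  by_contra hc
  push_neg at hc
  obtain ⟨q, h1, h2⟩ := exists_between hc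
  exact absurd (h q h1) (not_le.2 h2)

lemma ge_of_forall_lt' {a b : ℝ≥0∞} (h : ∀ q, q < b → q ≤ a) : b ≤ a := by
  by_contra hc
  push_neg at hc
  obtain ⟨q, h1, h2⟩ := exists_between hc
  exact absurd (h q h2) (not_le.2 h1)

lemma three_eps {ε : ℝ≥0∞} (h : 0 < ε) : ∃ η, 0 < η ∧ η + η + η < ε := by
  rcases eq_or_ne ε ⊤ with rfl | hne
  · exact ⟨1, one_pos, by norm_num⟩
  · refine ⟨ε / 4, ENNReal.div_pos h.ne' (by norm_num), ?_⟩
    have h4 : ε / 4 ≠ ⊤ := by simp [ENNReal.div_eq_top, hne]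
    have hlt : ε / 4 + ε / 4 + ε / 4 < ε / 4 + ε / 4 + ε / 4 + ε / 4 :=
      ENNReal.lt_add_right (by simp [ENNReal.add_ne_top, h4]) (ENNReal.div_pos h.ne' (by norm_num)).ne'
    have heq : ε / 4 + ε / 4 + ε / 4 + ε / 4 = ε := by
      rw [ENNReal.div_add_div_same, ENNReal.div_add_div_same, ENNReal.div_add_div_same,
        show ε + ε + ε + ε = 4 * ε by ring, ENNReal.mul_div_right_comm,
        ENNReal.div_self (by norm_num) (by norm_num), one_mul]
    rwa [heq] at hlt

/-- Approximation lemma: any point of `X` has, for any tolerance, a left-approximant in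
`Y` satisfying finitely many prescribed side conditions. -/
lemma approxY {X : Type} (d : X → X → ℝ≥0∞) (hd : IsDistance d) (Y : Set X)
    (hYC : ∀ x : X, ∃ (ι : Type) (r : ι → ι → Prop) (y : ι → X),
      Nonempty ι ∧ TransRel r ∧ DirRel r ∧ (∀ i, y i ∈ Y) ∧
      DCauchyN r d y ∧ BiConvOn r d Set.univ y x)
    (hfin : ∀ y ∈ Y, ∀ (ι : Type) (r : ι → ι → Prop) (x : ι → X) (l : X),
      Nonempty ι → TransRel r → DirRel r → (∀ i, x i ∈ Y) →
      DCauchyN r d x → BiConvOn r d Set.univ x l →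
        TendstoN r (fun i => d y (x i)) (d y l))
    (v : X) (δ : ℝ≥0∞) (hδ : 0 < δ) (S : Finset X) (C : Finset (X × ℝ≥0∞)) :
    ∃ z, z ∈ Y ∧ d z v < δ ∧ (∀ s ∈ S, s ∈ Y → d s z ≤ d s v + δ) ∧
      (∀ p ∈ C, p.2 < d v p.1 → p.2 < d z p.1) := by
  obtain ⟨κ, q, yN, hκne, hqtr, hqdir, hYmem, hqC, hconv⟩ := hYC v
  haveI := hκne
  obtain ⟨δ', hδ'0, hδ'δ⟩ := exists_between hδ
  obtain ⟨i₁, hi₁⟩ := hqC δ' hδ'0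
  have E1 : ∀ i, q i₁ i → d (yN i) v < δ := by
    intro i hi
    have h1 : d (yN i) v ≤ liminfN q fun j => d (yN i) (yN j) :=
      hconv.2 (yN i) (Set.mem_univ _)
    have h2 : (liminfN q fun j => d (yN i) (yN j)) ≤ δ' := by
      refine iSup_le fun γ' => ?_
      obtain ⟨j₀, hj1, hj2⟩ := hqdir γ' i
      exact le_trans (iInf₂_le j₀ hj1) (hi₁ i j₀ hi hj2).le
    exact lt_of_le_of_lt (h1.trans h2) hδ'δ
  have E2 : ∀ s : X, ∃ i₀, ∀ i, q i₀ i → s ∈ Y → d s (yN i) ≤ d s v + δ := by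
    intro s
    by_cases hsY : s ∈ Y
    · by_cases htop : d s v = ⊤
      · exact ⟨Classical.arbitrary κ, fun i _ _ => by simp [htop]⟩
      · have ht := hfin s hsY κ q yN v hκne hqtr hqdir hYmem hqC hconv
        have hlt : limsupN q (fun i => d s (yN i)) < d s v + δ := by
          rw [ht.2]; exact ENNReal.lt_add_right htop hδ.ne'
        rw [limsupN] at hlt
        obtain ⟨γ₀, hγ₀⟩ := iInf_lt_iff.1 hlt
        exact ⟨γ₀, fun i hi _ =>
          le_of_lt (lt_of_le_of_lt (le_iSup_of_le i (le_iSup (fun _ : q γ₀ i => d s (yN i)) hi)) hγ₀)⟩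
    · exact ⟨Classical.arbitrary κ, fun i _ hs => absurd hs hsY⟩
  have E3 : ∀ p : X × ℝ≥0∞, ∃ i₀, ∀ i, q i₀ i → p.2 < d v p.1 → p.2 < d (yN i) p.1 := by
    rintro ⟨c, t⟩
    by_cases hq : t < d v c
    · have h1 : d v c ≤ liminfN q fun i => d (yN i) c := hconv.1 c (Set.mem_univ _)
      have h2 : t < liminfN q fun i => d (yN i) c := lt_of_lt_of_le hq h1
      rw [liminfN] at h2
      obtain ⟨γ₀, hγ₀⟩ := lt_iSup_iff.1 h2
      exact ⟨γ₀, fun i hi _ => lt_of_lt_of_le hγ₀ (iInf₂_le i hi)⟩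
    · exact ⟨Classical.arbitrary κ, fun i _ h => absurd h hq⟩
  choose fS hfS using E2
  choose fC hfC using E3
  obtain ⟨iz, hiz⟩ := listUB hqtr hqdir hκne (i₁ :: (S.toList.map fS ++ C.toList.map fC))
  refine ⟨yN iz, hYmem _, E1 _ (hiz i₁ (by simp)), ?_, ?_⟩
  · intro s hs hsY
    refine hfS s iz (hiz (fS s) ?_) hsY
    simp only [List.mem_cons, List.mem_append, List.mem_map]
    exact Or.inr (Or.inl ⟨s, Finset.mem_toList.2 hs, rfl⟩)
  · intro p hp hq
    refine hfC p iz (hiz (fC p) ?_) hq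
    simp only [List.mem_cons, List.mem_append, List.mem_map]
    exact Or.inr (Or.inr ⟨p, Finset.mem_toList.2 hp, rfl⟩)

end Aux

/-- if `X = Y^C` and `d(y, x_λ) → d(y, x)` whenever `y ∈ Y`, `(x_λ)` is a
`d`-Cauchy net with terms in `Y` and `x_λ →^◦_◦ x`, then every element of `Y` is
`d`-finite, and `X` is `d`-algebraic: every element of `X` is a `→^◦_◦`-limit of a
`d`-Cauchy net of `d`-finite elements. -/
theorem stmt4 {X : Type} (d : X → X → ℝ≥0∞) (hd : IsDistance d) (Y : Set X)
    (hYC : ∀ x : X, ∃ (ι : Type) (r : ι → ι → Prop) (y : ι → X),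
      Nonempty ι ∧ TransRel r ∧ DirRel r ∧ (∀ i, y i ∈ Y) ∧
      DCauchyN r d y ∧ BiConvOn r d Set.univ y x)
    (hfin : ∀ y ∈ Y, ∀ (ι : Type) (r : ι → ι → Prop) (x : ι → X) (l : X),
      Nonempty ι → TransRel r → DirRel r → (∀ i, x i ∈ Y) →
      DCauchyN r d x → BiConvOn r d Set.univ x l →
        TendstoN r (fun i => d y (x i)) (d y l)) :
    (∀ y ∈ Y, DFinite d y) ∧
    ∀ x : X, ∃ (ι : Type) (r : ι → ι → Prop) (y : ι → X),
      Nonempty ι ∧ TransRel r ∧ DirRel r ∧ (∀ i, DFinite d (y i)) ∧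
      DCauchyN r d y ∧ BiConvOn r d Set.univ y x := by
  classical
  have hfinY : ∀ y ∈ Y, DFinite d y := by
    intro y hy ι r x l hne htr hdir hxC hxconv
    haveI := hne
    have hlow : d y l ≤ liminfN r fun γ => d y (x γ) := hxconv.2 y (Set.mem_univ _)
    set δn : ℕ → ℝ≥0∞ := fun n => (2 : ℝ≥0∞)⁻¹ ^ n with hδndef
    have hδnpos : ∀ n, 0 < δn n := fun n => pos_iff_ne_zero.2 (pow_ne_zero n (by simp))
    have hδnanti : ∀ m n : ℕ, m ≤ n → δn n ≤ δn m := fun m n h =>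
      pow_le_pow_of_le_one (by norm_num) (by norm_num) h
    have hδnlt : ∀ ε : ℝ≥0∞, 0 < ε → ∃ n, δn n < ε := fun ε hε =>
      ENNReal.exists_inv_two_pow_lt hε.ne'
    have hA : ∀ (γ : ι) (n : ℕ) (S : Finset X) (C : Finset (X × ℝ≥0∞)),
        ∃ z, z ∈ Y ∧ d z (x γ) < δn n ∧ (∀ s ∈ S, s ∈ Y → d s z ≤ d s (x γ) + δn n) ∧
          (∀ p ∈ C, p.2 < d (x γ) p.1 → p.2 < d z p.1) :=
      fun γ n S C => approxY d hd Y hYC hfin (x γ) (δn n) (hδnpos n) S C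
    choose w hwY hw1 hw2 hw3 using hA
    let J : Type := ι × ℕ × Finset X × Finset (X × ℝ≥0∞)
    let wJ : J → X := fun a => w a.1 a.2.1 a.2.2.1 a.2.2.2
    let rJ : J → J → Prop := fun a b =>
      r a.1 b.1 ∧ a.2.1 < b.2.1 ∧ a.2.2.1 ⊆ b.2.2.1 ∧ a.2.2.2 ⊆ b.2.2.2 ∧ wJ a ∈ b.2.2.1
    have hJne : Nonempty J := ⟨(Classical.arbitrary ι, 0, ∅, ∅)⟩
    have hJtr : TransRel rJ := by
      rintro a b c ⟨h1, h2, h3, h4, h5⟩ ⟨g1, g2, g3, g4, g5⟩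
      exact ⟨htr _ _ _ h1 g1, h2.trans g2, h3.trans g3, h4.trans g4, g3 h5⟩
    have hJdir : DirRel rJ := by
      intro a b
      obtain ⟨γ, hγ1, hγ2⟩ := hdir a.1 b.1
      refine ⟨(γ, max a.2.1 b.2.1 + 1,
        insert (wJ a) (insert (wJ b) (a.2.2.1 ∪ b.2.2.1)), a.2.2.2 ∪ b.2.2.2),
        ⟨hγ1, by dsimp only; omega, ?_, Finset.subset_union_left, by simp⟩,
        ⟨hγ2, by dsimp only; omega, ?_, Finset.subset_union_right, by simp⟩⟩
      · exact fun t ht => by simp [Finset.mem_union.2 (Or.inl ht)]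
      · exact fun t ht => by simp [Finset.mem_union.2 (Or.inr ht)]
    have hwJY : ∀ j : J, wJ j ∈ Y := fun j => hwY _ _ _ _
    have hJC : DCauchyN rJ d wJ := by
      intro ε hε
      obtain ⟨η, hη0, hη3⟩ := three_eps hε
      obtain ⟨n₀, hn₀⟩ := hδnlt η hη0
      obtain ⟨γ₀, hγ₀⟩ := hxC η hη0
      refine ⟨(γ₀, n₀, ∅, ∅), ?_⟩
      rintro a b ⟨h1, h2, -, -, -⟩ ⟨g1, g2, -, -, hmem⟩
      have t1 : d (wJ a) (wJ b) ≤ d (wJ a) (x b.1) + δn b.2.1 :=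
        hw2 b.1 b.2.1 b.2.2.1 b.2.2.2 (wJ a) hmem (hwJY a)
      have t2 : d (wJ a) (x b.1) ≤ d (wJ a) (x a.1) + d (x a.1) (x b.1) := hd _ _ _
      have t3 : d (wJ a) (x a.1) < η :=
        lt_of_lt_of_le (hw1 a.1 a.2.1 a.2.2.1 a.2.2.2) ((hδnanti _ _ h2.le).trans hn₀.le)
      have t4 : d (x a.1) (x b.1) < η := hγ₀ a.1 b.1 h1 g1
      have t5 : δn b.2.1 < η :=
        lt_of_le_of_lt (hδnanti _ _ (h2.trans g2).le) hn₀
      calc d (wJ a) (wJ b) ≤ (d (wJ a) (x a.1) + d (x a.1) (x b.1)) + δn b.2.1 :=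
            t1.trans (add_le_add t2 le_rfl)
        _ < (η + η) + η := ENNReal.add_lt_add (ENNReal.add_lt_add t3 t4) t5
        _ < ε := hη3
    have hJconv : BiConvOn rJ d Set.univ wJ l := by
      constructor
      · intro c _
        refine ge_of_forall_lt' fun t ht => ?_
        obtain ⟨t', ht1, ht2⟩ := exists_between ht
        have h2 : t' < liminfN r fun γ => d (x γ) c :=
          lt_of_lt_of_le ht2 (hxconv.1 c (Set.mem_univ _))
        rw [liminfN] at h2
        obtain ⟨γ₀, hγ₀⟩ := lt_iSup_iff.1 h2
        obtain ⟨γ₁, hγ₁, -⟩ := hdir γ₀ γ₀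
        rw [liminfN]
        refine le_trans ?_ (le_iSup _ ((γ₁, 0, ∅, {(c, t')}) : J))
        refine le_iInf fun b => le_iInf fun hb => ?_
        have hcq : (c, t') ∈ b.2.2.2 := hb.2.2.2.1 (Finset.mem_singleton_self _)
        have hxb : t' < d (x b.1) c := by
          refine lt_of_lt_of_le hγ₀ (iInf₂_le b.1 ?_)
          exact htr _ _ _ hγ₁ hb.1
        exact (ht1.trans (hw3 b.1 b.2.1 b.2.2.1 b.2.2.2 (c, t') hcq hxb)).le
      · intro c _
        refine ge_of_forall_lt' fun t ht => ?_
        obtain ⟨t', ht1, ht2⟩ := exists_between ht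
        have h2 : t' < liminfN r fun γ => d c (x γ) :=
          lt_of_lt_of_le ht2 (hxconv.2 c (Set.mem_univ _))
        rw [liminfN] at h2
        obtain ⟨γ₀, hγ₀⟩ := lt_iSup_iff.1 h2
        obtain ⟨n₁, hn₁⟩ := hδnlt (t' - t) (tsub_pos_of_lt ht1)
        obtain ⟨γ₁, hγ₁, -⟩ := hdir γ₀ γ₀
        rw [liminfN]
        refine le_trans ?_ (le_iSup _ ((γ₁, n₁, ∅, ∅) : J))
        refine le_iInf fun b => le_iInf fun hb => ?_
        by_contra hcon
        push_neg at hcon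
        have hxb : t' < d c (x b.1) := by
          refine lt_of_lt_of_le hγ₀ (iInf₂_le b.1 ?_)
          exact htr _ _ _ hγ₁ hb.1
        have htri : d c (x b.1) ≤ d c (wJ b) + d (wJ b) (x b.1) := hd _ _ _
        have hst : d c (wJ b) + d (wJ b) (x b.1) < t + δn n₁ :=
          ENNReal.add_lt_add hcon
            (lt_of_lt_of_le (hw1 b.1 b.2.1 b.2.2.1 b.2.2.2) (hδnanti _ _ hb.2.1.le))
        have hfin2 : t + δn n₁ < t + (t' - t) :=
          ENNReal.add_lt_add_left (ht1.trans_le le_top).ne hn₁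
        rw [add_tsub_cancel_of_le ht1.le] at hfin2
        exact absurd (hxb.trans_le htri) (not_lt.2 ((hst.trans hfin2).le))
    have hT := hfin y hy J rJ wJ l hJne hJtr hJdir hwJY hJC hJconv
    have hup : limsupN r (fun γ => d y (x γ)) ≤ d y l := by
      refine le_of_forall_gt' fun b hb => ?_
      obtain ⟨b', hb1, hb2⟩ := exists_between hb
      have h2 : limsupN rJ (fun j => d y (wJ j)) < b' := by rw [hT.2]; exact hb1
      rw [limsupN] at h2
      obtain ⟨j₀, hj₀⟩ := iInf_lt_iff.1 h2
      obtain ⟨n₁, hn₁⟩ := hδnlt (b - b') (tsub_pos_of_lt hb2)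
      obtain ⟨γ₁, hγ₁, -⟩ := hdir j₀.1 j₀.1
      rw [limsupN]
      refine le_trans (iInf_le _ γ₁) ?_
      refine iSup_le fun γ => iSup_le fun hγ => ?_
      set n : ℕ := max n₁ j₀.2.1 + 1 with hn
      set jb : J := (γ, n, insert (wJ j₀) j₀.2.2.1, j₀.2.2.2) with hjbdef
      have hjb : rJ j₀ jb := by
        refine ⟨htr _ _ _ hγ₁ hγ, by simp only [hjbdef]; omega, ?_, le_refl _, Finset.mem_insert_self _ _⟩
        exact Finset.subset_insert _ _
      have h3 : d y (wJ jb) < b' :=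
        lt_of_le_of_lt (le_iSup_of_le jb (le_iSup (fun _ : rJ j₀ jb => d y (wJ jb)) hjb)) hj₀
      have h4 : d y (x γ) ≤ d y (wJ jb) + d (wJ jb) (x γ) := hd _ _ _
      have h5 : d (wJ jb) (x γ) < δn n₁ :=
        lt_of_lt_of_le (hw1 jb.1 jb.2.1 jb.2.2.1 jb.2.2.2) (hδnanti _ _ (by simp only [hjbdef]; omega))
      have h6 : d y (wJ jb) + d (wJ jb) (x γ) < b' + (b - b') :=
        ENNReal.add_lt_add h3 (h5.trans hn₁)
      rw [add_tsub_cancel_of_le hb2.le] at h6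
      exact (h4.trans_lt h6).le
    have h1 : liminfN r (fun γ => d y (x γ)) ≤ limsupN r (fun γ => d y (x γ)) :=
      liminfN_le_limsupN hdir _
    exact ⟨le_antisymm (h1.trans hup) hlow, le_antisymm hup (hlow.trans h1)⟩
  refine ⟨hfinY, fun x => ?_⟩
  obtain ⟨ι, r, yn, h1, h2, h3, h4, h5, h6⟩ := hYC x
  exact ⟨ι, r, yn, h1, h2, h3, fun i => hfinY _ (h4 i), h5, h6⟩
end

section
/- Let X be a preordered Banach space. Then X^{S1} = X^S ∩ X^{**1} is d-complete: every d-Cauchy net in X^{S1} has a →^◦_◦-limit (holes tested against all points of X^{**}) lying in X^{S1}. -/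
open TopologicalSpace ENNReal

-- (base defs assumed above in real files)
/-- The bidual `X**` of a real normed space. -/
abbrev Bidual (X : Type) [NormedAddCommGroup X] [NormedSpace ℝ X] : Type :=
  StrongDual ℝ (StrongDual ℝ X)

/-- The positive cone of a preordered Banach space: a norm-closed set containing `0`,
closed under nonnegative scaling and addition. -/
def IsGoodCone (X : Type) [NormedAddCommGroup X] [NormedSpace ℝ X] (K : Set X) : Prop :=
  IsClosed K ∧ (0 : X) ∈ K ∧ (∀ r : ℝ, 0 ≤ r → ∀ x ∈ K, r • x ∈ K) ∧
    ∀ x ∈ K, ∀ y ∈ K, x + y ∈ K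

/-- `Q = X^{*1}_+`, the positive unit ball of the dual. -/
def posQ (X : Type) [NormedAddCommGroup X] [NormedSpace ℝ X] (K : Set X) :
    Set (StrongDual ℝ X) :=
  {φ | ‖φ‖ ≤ 1 ∧ ∀ v ∈ K, 0 ≤ φ v}

/-- The canonical hemimetric on `X**`: `d(x,y) = ‖x - y‖_≤ = sup_{φ ∈ Q} φ(x - y)`. -/
noncomputable def ddist {X : Type} [NormedAddCommGroup X] [NormedSpace ℝ X] (K : Set X)
    (x y : Bidual X) : ℝ≥0∞ :=
  ⨆ φ ∈ posQ X K, ENNReal.ofReal ((x - y) φ)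

/-- The weak* topology on `Q = X^{*1}_+`. -/
def qTop (X : Type) [NormedAddCommGroup X] [NormedSpace ℝ X] (K : Set X) :
    TopologicalSpace (posQ X K) :=
  TopologicalSpace.induced (fun φ : posQ X K => fun v : X => φ.1 v) inferInstance

/-- `x ∈ X^S`: the restriction of `x ∈ X**` to `Q` is weak* lower semicontinuous. -/
def lscS {X : Type} [NormedAddCommGroup X] [NormedSpace ℝ X] (K : Set X)
    (x : Bidual X) : Prop :=
  @LowerSemicontinuous (posQ X K) ℝ (qTop X K) _ fun φ => x φ.1

/-- `B^{<∞}`: the bounded functions `Q → X**`. -/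
def Bset (X : Type) [NormedAddCommGroup X] [NormedSpace ℝ X] (Q : Type) :
    Set (Q → Bidual X) := {f | ∃ M, ∀ p, ‖f p‖ ≤ M}

/-- The upper ball topology on `X^S`, generated by the balls
`{y | d(c, y) < ε}` for `c ∈ X^S`. -/
def upTopXS {X : Type} [NormedAddCommGroup X] [NormedSpace ℝ X] (K : Set X) :
    TopologicalSpace {x : Bidual X // lscS K x} :=
  TopologicalSpace.generateFrom
    {s | ∃ c : {x : Bidual X // lscS K x}, ∃ ε : ℝ≥0∞, 0 < ε ∧ s = {y | ddist K c.1 y.1 < ε}}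

/-- `f ∈ S`: a bounded function `Q → X**` taking values in `X^S` that is continuous
into `X^S` with its upper ball topology. -/
def MemS {X : Type} [NormedAddCommGroup X] [NormedSpace ℝ X] (K : Set X)
    {Q : Type} [TopologicalSpace Q] (f : Q → Bidual X) : Prop :=
  f ∈ Bset X Q ∧ ∃ h : ∀ p, lscS K (f p),
    @Continuous Q {x : Bidual X // lscS K x} _ (upTopXS K) fun p => ⟨f p, h p⟩

/-- `X^{S1} = X^S ∩ X^{**1}` is `d`-complete: every `d`-Cauchy net in
`X^{S1}` has a `→^◦_◦`-limit (holes tested against all of `X**`) lying in `X^{S1}`. -/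
theorem stmt6 (X : Type) [NormedAddCommGroup X] [NormedSpace ℝ X] [CompleteSpace X]
    (K : Set X) (hK : IsGoodCone X K)
    (ι : Type) (r : ι → ι → Prop) (x : ι → Bidual X)
    (hne : Nonempty ι) (htr : TransRel r) (hdir : DirRel r)
    (hx : ∀ i, lscS K (x i) ∧ ‖x i‖ ≤ 1)
    (hC : DCauchyN r (ddist K) x) :
    ∃ l : Bidual X, lscS K l ∧ ‖l‖ ≤ 1 ∧ BiConvOn r (ddist K) Set.univ x l := by
  classical
  haveI := hne
  -- tails and the section filter
  set T : ι → Set ι := fun γ => {δ | r γ δ} with hT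
  set F : Filter ι := ⨅ γ, Filter.principal (T γ) with hF
  have hTne : ∀ γ, (T γ).Nonempty := fun γ => ⟨(hdir γ γ).choose, (hdir γ γ).choose_spec.1⟩
  have hdirF : Directed (· ≥ ·) (fun γ => Filter.principal (T γ)) := by
    intro γ δ
    obtain ⟨c, h1, h2⟩ := hdir γ δ
    exact ⟨c, Filter.principal_mono.2 (fun e he => htr _ _ _ h1 he),
      Filter.principal_mono.2 (fun e he => htr _ _ _ h2 he)⟩
  haveI hFne : F.NeBot :=
    Filter.iInf_neBot_of_directed hdirF (fun γ => Filter.principal_neBot_iff.2 (hTne γ))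
  have hmemF : ∀ s : Set ι, s ∈ F ↔ ∃ γ, T γ ⊆ s := by
    intro s
    rw [hF, Filter.mem_iInf_of_directed hdirF]
    simp [Filter.mem_principal]
  have hTF : ∀ γ, T γ ∈ F := fun γ => (hmemF _).2 ⟨γ, subset_rfl⟩
  -- boundedness of values
  have hbdd : ∀ (ψ : StrongDual ℝ X) (γ : ι), |(x γ) ψ| ≤ ‖ψ‖ := by
    intro ψ γ
    have h1 : ‖(x γ) ψ‖ ≤ ‖x γ‖ * ‖ψ‖ := (x γ).le_opNorm ψ
    have h2 : ‖x γ‖ * ‖ψ‖ ≤ 1 * ‖ψ‖ :=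
      mul_le_mul_of_nonneg_right (hx γ).2 (norm_nonneg ψ)
    rw [Real.norm_eq_abs] at h1
    linarith
  -- an ultrafilter refining F
  obtain ⟨U, hU⟩ := Filter.exists_ultrafilter_le F
  -- ultrafilter limits exist for every dual functional
  have hULim : ∀ ψ : StrongDual ℝ X, ∃ L : ℝ, |L| ≤ ‖ψ‖ ∧
      Filter.Tendsto (fun γ => (x γ) ψ) ↑U (nhds L) := by
    intro ψ
    have hcpt : IsCompact (Metric.closedBall (0:ℝ) ‖ψ‖) := isCompact_closedBall _ _
    have hle : ↑(U.map fun γ => (x γ) ψ) ≤ Filter.principal (Metric.closedBall (0:ℝ) ‖ψ‖) := by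
      rw [Ultrafilter.coe_map, Filter.le_principal_iff, Filter.mem_map]
      refine Filter.univ_mem' fun γ => ?_
      simp only [Set.mem_preimage, Metric.mem_closedBall, Real.dist_eq, sub_zero]
      exact hbdd ψ γ
    obtain ⟨L, hLmem, hLle⟩ := hcpt.ultrafilter_le_nhds _ hle
    refine ⟨L, ?_, hLle⟩
    simpa [Real.dist_eq] using hLmem
  set g : StrongDual ℝ X → ℝ := fun ψ => (hULim ψ).choose with hg
  have hgT : ∀ ψ, Filter.Tendsto (fun γ => (x γ) ψ) ↑U (nhds (g ψ)) :=
    fun ψ => (hULim ψ).choose_spec.2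
  have hgbd : ∀ ψ, |g ψ| ≤ ‖ψ‖ := fun ψ => (hULim ψ).choose_spec.1
  have hadd : ∀ ψ₁ ψ₂, g (ψ₁ + ψ₂) = g ψ₁ + g ψ₂ := by
    intro ψ₁ ψ₂
    have h1 : Filter.Tendsto (fun γ => (x γ) (ψ₁ + ψ₂)) ↑U (nhds (g ψ₁ + g ψ₂)) := by
      have := (hgT ψ₁).add (hgT ψ₂)
      simpa [map_add] using this
    exact tendsto_nhds_unique (hgT (ψ₁ + ψ₂)) h1
  have hsmul : ∀ (c : ℝ) (ψ), g (c • ψ) = c * g ψ := by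
    intro c ψ
    have h1 : Filter.Tendsto (fun γ => (x γ) (c • ψ)) ↑U (nhds (c * g ψ)) := by
      have := (hgT ψ).const_mul c
      simpa [map_smul, smul_eq_mul] using this
    exact tendsto_nhds_unique (hgT (c • ψ)) h1
  set lm : StrongDual ℝ X →ₗ[ℝ] ℝ :=
    { toFun := g, map_add' := hadd, map_smul' := by intro c ψ; simpa using hsmul c ψ } with hlm
  set l : Bidual X := LinearMap.mkContinuous lm 1 (by
    intro ψ
    rw [one_mul]
    simpa [hlm, Real.norm_eq_abs] using hgbd ψ) with hl
  have hlval : ∀ ψ, l ψ = g ψ := fun ψ => rfl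
  have hlnorm : ‖l‖ ≤ 1 := LinearMap.mkContinuous_norm_le lm zero_le_one _
  -- real epsilon version of Cauchy condition
  have hCR : ∀ ε : ℝ, 0 < ε → ∃ γ₀, ∀ γ δ, r γ₀ γ → r γ δ →
      ∀ φ ∈ posQ X K, (x γ) φ - (x δ) φ < ε := by
    intro ε hε
    obtain ⟨γ₀, h⟩ := hC (ENNReal.ofReal ε) (ENNReal.ofReal_pos.2 hε)
    refine ⟨γ₀, fun γ δ h1 h2 φ hφ => ?_⟩
    have hd := h γ δ h1 h2
    have h3 : ENNReal.ofReal ((x γ - x δ) φ) ≤ ddist K (x γ) (x δ) :=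
      le_iSup₂ (f := fun φ (_ : φ ∈ posQ X K) => ENNReal.ofReal ((x γ - x δ) φ)) φ hφ
    have h4 : ENNReal.ofReal ((x γ - x δ) φ) < ENNReal.ofReal ε := lt_of_le_of_lt h3 hd
    have h5 : (x γ - x δ) φ < ε := (ENNReal.ofReal_lt_ofReal_iff hε).1 h4
    simpa [ContinuousLinearMap.sub_apply] using h5
  -- pointwise convergence along F on Q
  have hconvF : ∀ φ ∈ posQ X K, Filter.Tendsto (fun γ => (x γ) φ) F (nhds (l φ)) := by
    intro φ hφ
    have hcauchy : Cauchy (F.map fun γ => (x γ) φ) := by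
      rw [Metric.cauchy_iff]
      refine ⟨Filter.map_neBot, fun ε hε => ?_⟩
      obtain ⟨γ₀, hγ₀⟩ := hCR (ε/4) (by linarith)
      set Sv : Set ℝ := (fun δ => (x δ) φ) '' T γ₀ with hSv
      have hSne : Sv.Nonempty := (hTne γ₀).image _
      have hSbd : BddAbove Sv := by
        refine ⟨‖φ‖, ?_⟩
        rintro v ⟨δ, _, rfl⟩
        exact (abs_le.1 (hbdd φ δ)).2
      set s := sSup Sv with hs
      obtain ⟨v, hvmem, hv⟩ := exists_lt_of_lt_csSup hSne
        (show s - ε/4 < s by linarith)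
      obtain ⟨δs, hδs, rfl⟩ := hvmem
      refine ⟨(fun δ => (x δ) φ) '' T δs, Filter.image_mem_map (hTF δs), ?_⟩
      rintro a ⟨η₁, hη₁, rfl⟩ b ⟨η₂, hη₂, rfl⟩
      have key : ∀ η, r δs η → s - ε/2 < (x η) φ ∧ (x η) φ ≤ s := by
        intro η hη
        have h1 : (x δs) φ - (x η) φ < ε/4 := hγ₀ δs η hδs hη φ hφ
        have h2 : (x η) φ ≤ s := le_csSup hSbd ⟨η, htr _ _ _ hδs hη, rfl⟩
        exact ⟨by linarith, h2⟩
      obtain ⟨k1, k2⟩ := key η₁ hη₁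
      obtain ⟨k3, k4⟩ := key η₂ hη₂
      rw [Real.dist_eq, abs_sub_lt_iff]
      constructor <;> linarith
    obtain ⟨L, hL⟩ := CompleteSpace.complete hcauchy
    have hLT : Filter.Tendsto (fun γ => (x γ) φ) F (nhds L) := hL
    have hLU : Filter.Tendsto (fun γ => (x γ) φ) ↑U (nhds L) := hLT.mono_left hU
    have : l φ = L := tendsto_nhds_unique (hgT φ) hLU
    rwa [this]
  -- uniform domination: eventually x γ ≤ l + ε on all of Q
  have hdom : ∀ ε : ℝ, 0 < ε → ∃ γ₀, ∀ γ, r γ₀ γ → ∀ φ ∈ posQ X K,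
      (x γ) φ ≤ l φ + ε := by
    intro ε hε
    obtain ⟨γ₀, h⟩ := hCR (ε/2) (by linarith)
    refine ⟨γ₀, fun γ hγ φ hφ => ?_⟩
    have hev : ∀ᶠ δ in F, dist ((x δ) φ) (l φ) < ε/2 :=
      Metric.tendsto_nhds.1 (hconvF φ hφ) _ (by linarith)
    have hTγ : ∀ᶠ δ in F, δ ∈ T γ := hTF γ
    obtain ⟨δ, hδT, hδd⟩ := (hTγ.and hev).exists
    have h1 : (x γ) φ - (x δ) φ < ε/2 := h γ δ hγ hδT φ hφ
    rw [Real.dist_eq, abs_lt] at hδd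
    linarith [hδd.1, hδd.2]
  -- approximation from below at a point
  have happrox : ∀ φ ∈ posQ X K, ∀ ε : ℝ, 0 < ε → ∀ γ', ∃ γ, r γ' γ ∧
      l φ - ε < (x γ) φ := by
    intro φ hφ ε hε γ'
    have hev : ∀ᶠ δ in F, dist ((x δ) φ) (l φ) < ε :=
      Metric.tendsto_nhds.1 (hconvF φ hφ) _ hε
    have hTγ : ∀ᶠ δ in F, δ ∈ T γ' := hTF γ'
    obtain ⟨δ, hδT, hδd⟩ := (hTγ.and hev).exists
    rw [Real.dist_eq, abs_lt] at hδd
    exact ⟨δ, hδT, by linarith [hδd.1]⟩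
  -- lower semicontinuity of l on Q
  have hlsc : lscS K l := by
    intro φ₀ t ht
    set ε := (l φ₀.1 - t) / 3 with hεdef
    have hε : 0 < ε := by
      have : t < l φ₀.1 := ht
      rw [hεdef]; linarith
    obtain ⟨γ₀, hγ₀⟩ := hdom ε hε
    obtain ⟨γ, hγr, hγv⟩ := happrox φ₀.1 φ₀.2 ε hε γ₀
    have hxlsc := (hx γ).1
    have hev := hxlsc φ₀ ((x γ) φ₀.1 - ε) (by linarith)
    refine hev.mono fun φ hφ => ?_
    have h1 : (x γ) φ.1 ≤ l φ.1 + ε := hγ₀ γ hγr φ.1 φ.2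
    have h3 : 3 * ε = l φ₀.1 - t := by rw [hεdef]; ring
    linarith
  -- key lemma for convergence against holes
  have key : ∀ (t : ℝ) (b : ι → ℝ≥0∞),
      (∀ ε : ℝ, 0 < ε → ∃ γ₁, ∀ δ, r γ₁ δ → ENNReal.ofReal (t - ε) ≤ b δ) →
      ENNReal.ofReal t ≤ liminfN r b := by
    intro t b hb
    refine ENNReal.le_of_forall_pos_le_add fun ε hε _ => ?_
    obtain ⟨γ₁, h⟩ := hb ε (by exact_mod_cast hε)
    have h1 : ENNReal.ofReal (t - ε) ≤ liminfN r b := by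
      refine le_trans ?_ (le_iSup _ γ₁)
      exact le_iInf₂ fun δ hδ => h δ hδ
    calc ENNReal.ofReal t = ENNReal.ofReal ((t - ↑ε) + ↑ε) := by ring_nf
      _ ≤ ENNReal.ofReal (t - ↑ε) + ENNReal.ofReal ↑ε := ENNReal.ofReal_add_le
      _ ≤ liminfN r b + ↑ε := by
          gcongr
          exact ENNReal.ofReal_coe_nnreal.le
  refine ⟨l, hlsc, hlnorm, ?_, ?_⟩
  · -- UpperConvOn
    intro c _
    refine iSup₂_le fun φ hφ => ?_
    refine key _ _ fun ε hε => ?_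
    have hev : ∀ᶠ δ in F, l φ - ε < (x δ) φ :=
      (hconvF φ hφ).eventually (eventually_gt_nhds (by linarith))
    obtain ⟨γ₁, hsub⟩ := (hmemF _).1 hev
    refine ⟨γ₁, fun δ hδ => ?_⟩
    have h1 : l φ - ε < (x δ) φ := hsub hδ
    calc ENNReal.ofReal ((l - c) φ - ε) ≤ ENNReal.ofReal ((x δ - c) φ) := by
          apply ENNReal.ofReal_le_ofReal
          simp only [ContinuousLinearMap.sub_apply]
          linarith
      _ ≤ ddist K (x δ) c :=
          le_iSup₂ (f := fun φ (_ : φ ∈ posQ X K) => ENNReal.ofReal ((x δ - c) φ)) φ hφ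
  · -- LowerConvOn
    intro c _
    refine iSup₂_le fun φ hφ => ?_
    refine key _ _ fun ε hε => ?_
    have hev : ∀ᶠ δ in F, (x δ) φ < l φ + ε :=
      (hconvF φ hφ).eventually (eventually_lt_nhds (by linarith))
    obtain ⟨γ₁, hsub⟩ := (hmemF _).1 hev
    refine ⟨γ₁, fun δ hδ => ?_⟩
    have h1 : (x δ) φ < l φ + ε := hsub hδ
    calc ENNReal.ofReal ((c - l) φ - ε) ≤ ENNReal.ofReal ((c - x δ) φ) := by
          apply ENNReal.ofReal_le_ofReal
          simp only [ContinuousLinearMap.sub_apply]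
          linarith
      _ ≤ ddist K c (x δ) :=
          le_iSup₂ (f := fun φ (_ : φ ∈ posQ X K) => ENNReal.ofReal ((c - x δ) φ)) φ hφ
end

section
/- Let X be a preordered Banach space. Then X^C = X^D: an element x ∈ X** is the →^◦_◦-limit of a d-Cauchy net with terms in X if and only if it is the →^◦_◦-limit of a d-dominating net with terms in X. -/
open TopologicalSpace ENNReal

open Pointwise
section Aux

variable {X : Type} [NormedAddCommGroup X] [NormedSpace ℝ X]

local notation "jj" => NormedSpace.inclusionInDoubleDual ℝ X

lemma ddist_triangle (K : Set X) (a b c : Bidual X) :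
    ddist K a c ≤ ddist K a b + ddist K b c := by
  refine iSup₂_le fun φ hφ => ?_
  have h : (a - c) φ = (a - b) φ + (b - c) φ := by
    simp only [ContinuousLinearMap.sub_apply]; ring
  calc ENNReal.ofReal ((a - c) φ)
      ≤ ENNReal.ofReal ((a - b) φ) + ENNReal.ofReal ((b - c) φ) := by
        rw [h]; exact ENNReal.ofReal_add_le
    _ ≤ ddist K a b + ddist K b c :=
        add_le_add (le_iSup₂ (f := fun φ _ => ENNReal.ofReal ((a - b) φ)) φ hφ)
          (le_iSup₂ (f := fun φ _ => ENNReal.ofReal ((b - c) φ)) φ hφ)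

lemma ddist_self (K : Set X) (a : Bidual X) : ddist K a a = 0 := by
  simp [ddist]

lemma jj_sub_apply (u v : X) (φ : StrongDual ℝ X) :
    (jj u - jj v) φ = φ (u - v) := by
  simp [ContinuousLinearMap.sub_apply, NormedSpace.dual_def]

lemma ddist_coe_le_norm (K : Set X) (u v : X) :
    ddist K (jj u) (jj v) ≤ ENNReal.ofReal ‖u - v‖ := by
  refine iSup₂_le fun φ hφ => ?_
  rw [jj_sub_apply]
  refine ENNReal.ofReal_le_ofReal ?_
  calc φ (u - v) ≤ ‖φ (u - v)‖ := by rw [Real.norm_eq_abs]; exact le_abs_self _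
    _ ≤ ‖φ‖ * ‖u - v‖ := φ.le_opNorm _
    _ ≤ 1 * ‖u - v‖ := by
        have := hφ.1
        nlinarith [norm_nonneg (u - v)]
    _ = ‖u - v‖ := one_mul _

lemma ddist_coe_eq_zero (K : Set X) {u v : X} (h : v - u ∈ K) :
    ddist K (jj u) (jj v) = 0 := by
  refine le_antisymm (iSup₂_le fun φ hφ => ?_) zero_le
  rw [jj_sub_apply]
  have heq : φ (u - v) = -φ (v - u) := by rw [← map_neg]; congr 1; abel
  have h0 : φ (u - v) ≤ 0 := by rw [heq]; linarith [hφ.2 _ h]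
  exact le_of_eq (ENNReal.ofReal_eq_zero.2 h0)

lemma exists_rat_pos_lt {ε : ℝ≥0∞} (hε : 0 < ε) :
    ∃ q : ℚ, 0 < q ∧ ENNReal.ofReal q < ε := by
  rcases eq_or_ne ε ⊤ with rfl | hne
  · exact ⟨1, one_pos, by simp [ENNReal.ofReal_lt_top]⟩
  · have h1 : 0 < ε.toReal := ENNReal.toReal_pos hε.ne' hne
    obtain ⟨q, hq0, hq1⟩ := exists_rat_btwn h1
    refine ⟨q, by exact_mod_cast hq0, ?_⟩
    rw [← ENNReal.ofReal_toReal hne]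
    exact ENNReal.ofReal_lt_ofReal_iff h1 |>.2 hq1

lemma hb_approx (K : Set X) (hK : IsGoodCone X K) {u v : X} {e : ℝ} (he : 0 < e)
    (h : ddist K (jj u) (jj v) < ENNReal.ofReal e) :
    ∃ a : X, ‖a‖ < 2 * e ∧ v - u + a ∈ K := by
  by_contra hcon
  push_neg at hcon
  set w := u - v with hw
  have hKey : ∀ k ∈ K, 2 * e ≤ ‖w + k‖ := by
    intro k hk
    by_contra hlt
    push_neg at hlt
    have hmem := hcon (w + k) hlt
    have hrw : v - u + (w + k) = k := by rw [hw]; abel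
    rw [hrw] at hmem
    exact hmem hk
  -- the open convex set (-K) + ball 0 (2e)
  set s : Set X := (-K) + Metric.ball (0 : X) (2 * e) with hs
  have hws : w ∉ s := by
    rintro ⟨a, ha, b, hb, hab⟩
    rcases Set.mem_neg.1 ha with hka
    have heq : w + -a = b := by
      rw [← hab]; show a + b + -a = b; abel
    have : ‖w + -a‖ < 2 * e := by
      rw [heq]; simpa [Metric.mem_ball, dist_zero_right] using hb
    exact absurd this (not_lt.2 (hKey (-a) hka))
  have hconv : Convex ℝ s := by
    refine Convex.add ?_ (convex_ball 0 (2 * e))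
    intro p hp q hq a b ha hb hab
    rcases Set.mem_neg.1 hp with hp'
    rcases Set.mem_neg.1 hq with hq'
    refine Set.mem_neg.2 ?_
    have : -(a • p + b • q) = a • (-p) + b • (-q) := by module
    rw [this]
    exact hK.2.2.2 _ (hK.2.2.1 a ha _ hp') _ (hK.2.2.1 b hb _ hq')
  have hopen : IsOpen s := by
    rw [hs]
    exact Metric.isOpen_ball.add_left
  obtain ⟨f, hf⟩ := geometric_hahn_banach_open_point hconv hopen hws
  have h0s : (0 : X) ∈ s :=
    ⟨0, Set.mem_neg.2 (by simpa using hK.2.1), 0, Metric.mem_ball_self (by positivity),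
      by simp⟩
  have hfw : 0 < f w := by simpa using hf 0 h0s
  have hfK : ∀ k ∈ K, 0 ≤ f k := by
    intro k hk
    by_contra hneg
    push_neg at hneg
    set c : ℝ := (f w + 1) / (-f k) with hc
    have hc0 : 0 < c := by rw [hc]; exact div_pos (by linarith) (by linarith)
    have hmem : -(c • k) ∈ s :=
      ⟨-(c • k), Set.mem_neg.2 (by simpa using hK.2.2.1 c hc0.le _ hk), 0,
        Metric.mem_ball_self (by positivity), by simp⟩
    have := hf _ hmem
    rw [map_neg, map_smul] at this
    have hkne : -f k ≠ 0 := by linarith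
    have h1 : c * (-f k) = f w + 1 := by rw [hc]; exact div_mul_cancel₀ _ hkne
    have hcalc : -(c • f k) = f w + 1 := by
      rw [smul_eq_mul]
      have hr : -(c * f k) = c * (-f k) := by ring
      rw [hr, h1]
    rw [hcalc] at this
    linarith
  have hball : ∀ b : X, ‖b‖ < 2 * e → f b < f w := by
    intro b hb
    exact hf b ⟨0, Set.mem_neg.2 (by simpa using hK.2.1), b,
      by simpa [Metric.mem_ball, dist_zero_right] using hb, by simp⟩
  have hfne : f ≠ 0 := by
    intro h0
    rw [h0] at hfw; simp at hfw
  have hnf : 0 < ‖f‖ := norm_pos_iff.2 hfne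
  have hnorm_le : 2 * e * ‖f‖ ≤ f w := by
    by_contra hlt
    push_neg at hlt
    have hr : f w / (2 * e) < ‖f‖ := by
      rw [div_lt_iff₀ (by positivity)]; linarith [hlt]
    obtain ⟨z, hz1, hz2⟩ := f.exists_lt_apply_of_lt_opNorm hr
    have hz2' : f w < |f z| * (2 * e) := by
      have : f w / (2 * e) < |f z| := by simpa [Real.norm_eq_abs] using hz2
      rwa [div_lt_iff₀ (by positivity : (0:ℝ) < 2*e)] at this
    rcases le_or_gt 0 (f z) with hsign | hsign
    · have hb := hball ((2 * e) • z) (by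
        rw [norm_smul, Real.norm_eq_abs, abs_of_pos (by positivity : (0:ℝ) < 2*e)]
        nlinarith [mul_pos (by positivity : (0:ℝ) < 2*e) (by linarith : 0 < 1 - ‖z‖)])
      rw [map_smul, smul_eq_mul] at hb
      rw [abs_of_nonneg hsign, mul_comm] at hz2'
      linarith
    · have hb := hball ((2 * e) • (-z)) (by
        rw [norm_smul, Real.norm_eq_abs, abs_of_pos (by positivity : (0:ℝ) < 2*e), norm_neg]
        nlinarith [mul_pos (by positivity : (0:ℝ) < 2*e) (by linarith : 0 < 1 - ‖z‖)])
      rw [map_smul, map_neg, smul_eq_mul] at hb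
      rw [abs_of_neg hsign, mul_comm] at hz2'
      linarith
  -- normalize
  set φ : StrongDual ℝ X := ‖f‖⁻¹ • f with hφdef
  have hφQ : φ ∈ posQ X K := by
    constructor
    · rw [hφdef, norm_smul]
      simp [Real.norm_eq_abs, abs_of_pos (inv_pos.2 hnf)]
      rw [inv_mul_cancel₀ hnf.ne']
    · intro k hk
      rw [hφdef]
      simp only [ContinuousLinearMap.smul_apply, smul_eq_mul]
      exact mul_nonneg (inv_pos.2 hnf).le (hfK k hk)
  have hφw : 2 * e ≤ φ w := by
    rw [hφdef]
    simp only [ContinuousLinearMap.smul_apply, smul_eq_mul]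
    have hmono : ‖f‖⁻¹ * (2 * e * ‖f‖) ≤ ‖f‖⁻¹ * f w :=
      mul_le_mul_of_nonneg_left hnorm_le (inv_pos.2 hnf).le
    have heq : ‖f‖⁻¹ * (2 * e * ‖f‖) = 2 * e := by field_simp
    linarith
  have hle : ENNReal.ofReal (φ w) ≤ ddist K (jj u) (jj v) := by
    have := le_iSup₂ (f := fun ψ (_ : ψ ∈ posQ X K) => ENNReal.ofReal ((jj u - jj v) ψ)) φ hφQ
    rwa [jj_sub_apply] at this
  have : ENNReal.ofReal e < ENNReal.ofReal (φ w) := by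
    refine (ENNReal.ofReal_lt_ofReal_iff (by linarith)).2 (by linarith)
  exact absurd (lt_of_le_of_lt hle h) (not_lt.2 this.le)

end Aux
section Nets

variable {X : Type} [NormedAddCommGroup X] [NormedSpace ℝ X]

local notation "jj" => NormedSpace.inclusionInDoubleDual ℝ X

lemma liminf_transfer {ι J : Type} (r : ι → ι → Prop) (R : J → J → Prop) (π : J → ι)
    (hπ : ∀ μ, ∃ Γ : J, ∀ Δ, R Γ Δ → r μ (π Δ)) (g : ι → ℝ≥0∞) :
    liminfN r g ≤ liminfN R (fun Γ => g (π Γ)) := by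
  refine iSup_le fun μ => ?_
  obtain ⟨Γ, hΓ⟩ := hπ μ
  refine le_iSup_of_le Γ ?_
  refine le_iInf fun Δ => le_iInf fun hΔ => ?_
  exact iInf₂_le (π Δ) (hΓ Δ hΔ)

lemma dom_to_cauchy (K : Set X) (x : Bidual X)
    (h : ∃ (ι : Type) (r : ι → ι → Prop) (y : ι → X),
      Nonempty ι ∧ TransRel r ∧ DirRel r ∧
      DDomN r (ddist K) (fun i => jj (y i)) ∧
      BiConvOn r (ddist K) Set.univ (fun i => jj (y i)) x) :
    ∃ (ι : Type) (r : ι → ι → Prop) (y : ι → X),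
      Nonempty ι ∧ TransRel r ∧ DirRel r ∧
      DCauchyN r (ddist K) (fun i => jj (y i)) ∧
      BiConvOn r (ddist K) Set.univ (fun i => jj (y i)) x := by
  obtain ⟨ι, r, y, ⟨γ0⟩, htr, hdir, hdom, hup, hlo⟩ := h
  set J := ι × {q : ℚ // 0 < q} with hJ
  set R : J → J → Prop := fun a b =>
    (b.2.1 ≤ a.2.1) ∧ r a.1 b.1 ∧
    (∀ l, r b.1 l → ddist K (jj (y a.1)) (jj (y l)) < ENNReal.ofReal (a.2.1 : ℝ)) ∧
    ddist K (jj (y a.1)) (jj (y b.1)) < ENNReal.ofReal (a.2.1 : ℝ) with hR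
  have hπ : ∀ μ : ι, ∃ Γ : J, ∀ Δ : J, R Γ Δ → r μ Δ.1 :=
    fun μ => ⟨(μ, ⟨1, one_pos⟩), fun Δ hΔ => hΔ.2.1⟩
  refine ⟨J, R, fun Γ => y Γ.1, ⟨(γ0, ⟨1, one_pos⟩)⟩, ?_, ?_, ?_, ?_, ?_⟩
  · -- trans
    rintro a b c ⟨h1, h2, h3, h4⟩ ⟨g1, g2, g3, g4⟩
    exact ⟨g1.trans h1, htr _ _ _ h2 g2, fun l hl => h3 l (htr _ _ _ g2 hl), h3 _ g2⟩
  · -- directed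
    rintro a b
    set m : ℚ := min a.2.1 b.2.1 with hm
    have hm0 : 0 < m := lt_min a.2.2 b.2.2
    have hm0' : (0 : ℝ≥0∞) < ENNReal.ofReal (m : ℝ) :=
      ENNReal.ofReal_pos.2 (by exact_mod_cast hm0)
    obtain ⟨d₁, hd₁, hd₁'⟩ := hdom a.1 _ hm0'
    obtain ⟨d₂, hd₂, hd₂'⟩ := hdom b.1 _ hm0'
    obtain ⟨μ, hμ₁, hμ₂⟩ := hdir d₁ d₂
    have hma : ENNReal.ofReal (m : ℝ) ≤ ENNReal.ofReal ((a.2.1 : ℚ) : ℝ) :=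
      ENNReal.ofReal_le_ofReal (by exact_mod_cast min_le_left _ _)
    have hmb : ENNReal.ofReal (m : ℝ) ≤ ENNReal.ofReal ((b.2.1 : ℚ) : ℝ) :=
      ENNReal.ofReal_le_ofReal (by exact_mod_cast min_le_right _ _)
    refine ⟨(μ, ⟨m, hm0⟩), ⟨min_le_left _ _, htr _ _ _ hd₁ hμ₁,
      fun l hl => lt_of_lt_of_le (hd₁' l (htr _ _ _ hμ₁ hl)) hma,
      lt_of_lt_of_le (hd₁' μ hμ₁) hma⟩,
      ⟨min_le_right _ _, htr _ _ _ hd₂ hμ₂,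
      fun l hl => lt_of_lt_of_le (hd₂' l (htr _ _ _ hμ₂ hl)) hmb,
      lt_of_lt_of_le (hd₂' μ hμ₂) hmb⟩⟩
  · -- Cauchy
    intro ε hε
    obtain ⟨q, hq, hqlt⟩ := exists_rat_pos_lt hε
    refine ⟨(γ0, ⟨q, hq⟩), fun Γ Δ h1 h2 => ?_⟩
    calc ddist K (jj (y Γ.1)) (jj (y Δ.1)) < ENNReal.ofReal (Γ.2.1 : ℝ) := h2.2.2.2
      _ ≤ ENNReal.ofReal (q : ℝ) := ENNReal.ofReal_le_ofReal (by exact_mod_cast h1.1)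
      _ < ε := hqlt
  · -- upper conv
    intro c _
    exact le_trans (hup c (Set.mem_univ c))
      (liminf_transfer r R (fun Γ => Γ.1) hπ (fun i => ddist K (jj (y i)) c))
  · -- lower conv
    intro c _
    exact le_trans (hlo c (Set.mem_univ c))
      (liminf_transfer r R (fun Γ => Γ.1) hπ (fun i => ddist K c (jj (y i))))

end Nets
section Core

variable {X : Type} [NormedAddCommGroup X] [NormedSpace ℝ X] [CompleteSpace X]

local notation "jj" => NormedSpace.inclusionInDoubleDual ℝ X

set_option maxHeartbeats 1000000 in
lemma core_construction (K : Set X) (hK : IsGoodCone X K)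
    {ι : Type} (r : ι → ι → Prop) (y : ι → X)
    (htr : TransRel r) (hdir : DirRel r)
    (hcauchy : DCauchyN r (ddist K) (fun i => jj (y i)))
    (g0 : ι) (e : ℝ) (he : 0 < e) :
    ∃ w : X,
      (∀ ε : ℝ≥0∞, 0 < ε → ∃ γ, ∀ δ, r γ δ → ddist K (jj w) (jj (y δ)) < ε) ∧
      ∃ δ, r g0 δ ∧ ddist K (jj (y δ)) (jj w) ≤ ENNReal.ofReal (4 * e) := by
  classical
  have hpow : ∀ n : ℕ, (0:ℝ) < e * (1/2)^n := fun n => by positivity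
  have hcau' : ∀ n : ℕ, ∃ γ₀, ∀ γ δ, r γ₀ γ → r γ δ →
      ddist K (jj (y γ)) (jj (y δ)) < ENNReal.ofReal (e * (1/2)^n) :=
    fun n => hcauchy _ (ENNReal.ofReal_pos.2 (hpow n))
  choose cLev hcLev using hcau'
  choose u hu1 hu2 using hdir
  let f : ℕ → ι := fun n => Nat.rec (u g0 (cLev 0)) (fun m ih => u ih (cLev (m+1))) n
  have hf0 : r g0 (f 0) := hu1 g0 (cLev 0)
  have hfs : ∀ n, r (f n) (f (n+1)) := fun n => hu1 (f n) (cLev (n+1))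
  have hfC : ∀ n, r (cLev n) (f n) := by
    intro n
    cases n with
    | zero => exact hu2 g0 (cLev 0)
    | succ m => exact hu2 (f m) (cLev (m+1))
  have hD : ∀ n δ, r (f n) δ →
      ddist K (jj (y (f n))) (jj (y δ)) < ENNReal.ofReal (e * (1/2)^n) :=
    fun n δ h => hcLev n _ _ (hfC n) h
  have haEx : ∀ n, ∃ a : X, ‖a‖ < 2 * (e * (1/2)^n) ∧
      y (f (n+1)) - y (f n) + a ∈ K :=
    fun n => hb_approx K hK (hpow n) (hD n (f (n+1)) (hfs n))
  choose a ha1 ha2 using haEx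
  have hbound : ∀ n, ‖a n‖ ≤ (2*e) * (1/2:ℝ)^n := by
    intro n
    calc ‖a n‖ ≤ 2 * (e * (1/2)^n) := (ha1 n).le
      _ = (2*e) * (1/2:ℝ)^n := by ring
  have hgeo : Summable fun n : ℕ => (2*e) * (1/2:ℝ)^n :=
    (summable_geometric_of_lt_one (by norm_num) (by norm_num)).mul_left _
  have hSum : Summable a := Summable.of_norm_bounded hgeo hbound
  have hSumN : Summable fun n => ‖a n‖ :=
    Summable.of_nonneg_of_le (fun n => norm_nonneg _) hbound hgeo
  have htail : ∀ n : ℕ, Summable fun j => a (j + n) :=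
    fun n => (summable_nat_add_iff n).2 hSum
  have htailN : ∀ n : ℕ, Summable fun j => ‖a (j + n)‖ :=
    fun n => (summable_nat_add_iff n).2 hSumN
  let S : ℕ → X := fun n => ∑' j, a (j + n)
  have hSrec : ∀ n, S n = a n + S (n+1) := by
    intro n
    have h1 : S n = a (0 + n) + ∑' j, a ((j+1) + n) := Summable.tsum_eq_zero_add (htail n)
    have h2 : (∑' j, a ((j+1) + n)) = ∑' j, a (j + (n+1)) :=
      tsum_congr fun j => by rw [show (j+1)+n = j+(n+1) from by omega]
    rw [h1, h2, Nat.zero_add]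
  have hSnorm : ∀ n, ‖S n‖ ≤ (4*e) * (1/2:ℝ)^n := by
    intro n
    calc ‖S n‖ ≤ ∑' j, ‖a (j + n)‖ := norm_tsum_le_tsum_norm (htailN n)
      _ ≤ ∑' j : ℕ, (2*e) * (1/2:ℝ)^(j+n) :=
          Summable.tsum_le_tsum (fun j => hbound _) (htailN n)
            ((summable_nat_add_iff (f := fun m : ℕ => (2*e) * (1/2:ℝ)^m) n).2 hgeo)
      _ = ((2*e) * (1/2:ℝ)^n) * ∑' j : ℕ, (1/2:ℝ)^j := by
          rw [← tsum_mul_left]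
          exact tsum_congr fun j => by rw [pow_add]; ring
      _ = ((2*e) * (1/2:ℝ)^n) * 2 := by
          rw [tsum_geometric_of_lt_one (by norm_num) (by norm_num)]; norm_num
      _ = (4*e) * (1/2:ℝ)^n := by ring
  let b : ℕ → X := fun n => y (f n) - S n
  have hbK : ∀ n, b (n+1) - b n ∈ K := by
    intro n
    have hh : b (n+1) - b n = y (f (n+1)) - y (f n) + a n := by
      show (y (f (n+1)) - S (n+1)) - (y (f n) - S n) = _
      rw [hSrec n]; abel
    rw [hh]; exact ha2 n
  have hbchain : ∀ n m, n ≤ m → b m - b n ∈ K := by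
    intro n m hnm
    induction m, hnm using Nat.le_induction with
    | base => simpa using hK.2.1
    | succ k hk ih =>
      have hh : b (k+1) - b n = (b (k+1) - b k) + (b k - b n) := by abel
      rw [hh]; exact hK.2.2.2 _ (hbK k) _ ih
  have hbnorm : ∀ n, ‖y (f n) - b n‖ ≤ (4*e) * (1/2:ℝ)^n := by
    intro n
    have hbn : y (f n) - b n = S n := by
      show y (f n) - (y (f n) - S n) = S n
      abel
    rw [hbn]
    exact hSnorm n
  have hbL : ∀ N, ∀ ε : ℝ≥0∞, 0 < ε → ∃ γ, ∀ δ, r γ δ →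
      ddist K (jj (b N)) (jj (y δ)) < ε := by
    intro N ε hε
    obtain ⟨n, hnN, hlt⟩ : ∃ n, N ≤ n ∧ ENNReal.ofReal ((5*e) * (1/2:ℝ)^n) < ε := by
      rcases eq_or_ne ε ⊤ with rfl | hne
      · exact ⟨N, le_refl N, ENNReal.ofReal_lt_top⟩
      · have ht : 0 < ε.toReal := ENNReal.toReal_pos hε.ne' hne
        obtain ⟨n₀, hn₀⟩ := exists_pow_lt_of_lt_one
          (div_pos ht (by positivity : (0:ℝ) < 5*e)) (by norm_num : (1/2:ℝ) < 1)
        refine ⟨max N n₀, le_max_left _ _, ?_⟩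
        have hp : ((1:ℝ)/2)^(max N n₀) ≤ (1/2:ℝ)^n₀ :=
          pow_le_pow_of_le_one (by norm_num) (by norm_num) (le_max_right _ _)
        have hlt' : (5*e) * (1/2:ℝ)^(max N n₀) < ε.toReal := by
          rw [lt_div_iff₀ (by positivity : (0:ℝ) < 5*e)] at hn₀
          nlinarith [hp]
        calc ENNReal.ofReal ((5*e) * (1/2:ℝ)^(max N n₀)) < ENNReal.ofReal ε.toReal :=
              (ENNReal.ofReal_lt_ofReal_iff ht).2 hlt'
          _ = ε := ENNReal.ofReal_toReal hne
    refine ⟨f n, fun δ hδ => ?_⟩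
    have t1 : ddist K (jj (b N)) (jj (b n)) = 0 := ddist_coe_eq_zero K (hbchain N n hnN)
    have t2 : ddist K (jj (b n)) (jj (y (f n))) ≤ ENNReal.ofReal ((4*e)*(1/2:ℝ)^n) := by
      refine le_trans (ddist_coe_le_norm K _ _) (ENNReal.ofReal_le_ofReal ?_)
      have hh : b n - y (f n) = -(y (f n) - b n) := by abel
      rw [hh, norm_neg]; exact hbnorm n
    have t3 : ddist K (jj (y (f n))) (jj (y δ)) < ENNReal.ofReal (e*(1/2:ℝ)^n) := hD n δ hδ
    calc ddist K (jj (b N)) (jj (y δ))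
        ≤ ddist K (jj (b N)) (jj (b n)) + ddist K (jj (b n)) (jj (y (f n)))
          + ddist K (jj (y (f n))) (jj (y δ)) := by
          refine le_trans (ddist_triangle K _ (jj (y (f n))) _) ?_
          exact add_le_add_left (ddist_triangle K _ (jj (b n)) _) _
      _ = ddist K (jj (b n)) (jj (y (f n))) + ddist K (jj (y (f n))) (jj (y δ)) := by
          rw [t1, zero_add]
      _ < ENNReal.ofReal ((4*e)*(1/2:ℝ)^n) + ENNReal.ofReal (e*(1/2:ℝ)^n) :=
          ENNReal.add_lt_add_of_le_of_lt (ne_top_of_le_ne_top ENNReal.ofReal_ne_top t2) t2 t3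
      _ = ENNReal.ofReal ((5*e)*(1/2:ℝ)^n) := by
          rw [← ENNReal.ofReal_add (by positivity) (by positivity)]
          congr 1
          ring
      _ < ε := hlt
  refine ⟨b 0, hbL 0, f 0, hf0, ?_⟩
  refine le_trans (ddist_coe_le_norm K _ _) (ENNReal.ofReal_le_ofReal ?_)
  have hb0 := hbnorm 0
  norm_num at hb0
  linarith

end Core
section Main

variable {X : Type} [NormedAddCommGroup X] [NormedSpace ℝ X] [CompleteSpace X]

local notation "jj" => NormedSpace.inclusionInDoubleDual ℝ X

lemma cauchy_to_dom (K : Set X) (hK : IsGoodCone X K) (x : Bidual X)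
    (h : ∃ (ι : Type) (r : ι → ι → Prop) (y : ι → X),
      Nonempty ι ∧ TransRel r ∧ DirRel r ∧
      DCauchyN r (ddist K) (fun i => jj (y i)) ∧
      BiConvOn r (ddist K) Set.univ (fun i => jj (y i)) x) :
    ∃ (ι : Type) (r : ι → ι → Prop) (y : ι → X),
      Nonempty ι ∧ TransRel r ∧ DirRel r ∧
      DDomN r (ddist K) (fun i => jj (y i)) ∧
      BiConvOn r (ddist K) Set.univ (fun i => jj (y i)) x := by
  obtain ⟨ι, r, y, ⟨γ0⟩, htr, hdir, hcauchy, hup, hlo⟩ := h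
  set L : Set X :=
    {w | ∀ ε : ℝ≥0∞, 0 < ε → ∃ γ, ∀ δ, r γ δ → ddist K (jj w) (jj (y δ)) < ε} with hLdef
  have hKEY2 : ∀ ε : ℝ≥0∞, 0 < ε → ∃ γ₁, ∀ γ, r γ₁ γ → ddist K (jj (y γ)) x ≤ ε := by
    intro ε hε
    obtain ⟨γ₁, hγ₁⟩ := hcauchy ε hε
    refine ⟨γ₁, fun γ hγ => ?_⟩
    refine le_trans (hlo (jj (y γ)) (Set.mem_univ _)) ?_
    refine iSup_le fun μ => ?_
    obtain ⟨l, hl1, hl2⟩ := hdir μ γ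
    exact le_trans (iInf₂_le l hl1) (hγ₁ γ l hγ hl2).le
  have hLzero : ∀ w ∈ L, ddist K (jj w) x = 0 := by
    intro w hw
    refine le_antisymm ?_ zero_le
    refine ENNReal.le_of_forall_pos_le_add fun η hη _ => ?_
    rw [zero_add]
    have hη2 : (0:ℝ≥0∞) < (η:ℝ≥0∞)/2 :=
      ENNReal.div_pos (by exact_mod_cast hη.ne') (by norm_num)
    obtain ⟨γa, hγa⟩ := hw _ hη2
    obtain ⟨γ₁, hγ₁⟩ := hKEY2 _ hη2
    obtain ⟨δ, hδ1, hδ2⟩ := hdir γa γ₁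
    calc ddist K (jj w) x ≤ ddist K (jj w) (jj (y δ)) + ddist K (jj (y δ)) x :=
          ddist_triangle K _ _ _
      _ ≤ (η:ℝ≥0∞)/2 + (η:ℝ≥0∞)/2 := add_le_add (hγa δ hδ1).le (hγ₁ δ hδ2)
      _ = (η:ℝ≥0∞) := ENNReal.add_halves _
  have hLdir : ∀ wa ∈ L, ∀ wb ∈ L, ∀ e : ℝ, 0 < e →
      ∃ w ∈ L, ddist K (jj wa) (jj w) ≤ ENNReal.ofReal e ∧
        ddist K (jj wb) (jj w) ≤ ENNReal.ofReal e := by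
    intro wa hwa wb hwb e he
    have he2 : (0:ℝ≥0∞) < ENNReal.ofReal (e/2) := ENNReal.ofReal_pos.2 (by linarith)
    obtain ⟨γa, hγa⟩ := hwa _ he2
    obtain ⟨γb, hγb⟩ := hwb _ he2
    obtain ⟨γc, hc1, hc2⟩ := hdir γa γb
    obtain ⟨w, hwL, δ, hδ, hwδ⟩ :=
      core_construction K hK r y htr hdir hcauchy γc (e/8) (by linarith)
    have h48 : ENNReal.ofReal (4*(e/8)) = ENNReal.ofReal (e/2) := by
      rw [show 4*(e/8) = e/2 by ring]
    have hsum : ENNReal.ofReal (e/2) + ENNReal.ofReal (e/2) = ENNReal.ofReal e := by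
      rw [← ENNReal.ofReal_add (by linarith) (by linarith)]
      rw [show e/2 + e/2 = e by ring]
    refine ⟨w, hwL, ?_, ?_⟩
    · calc ddist K (jj wa) (jj w)
          ≤ ddist K (jj wa) (jj (y δ)) + ddist K (jj (y δ)) (jj w) := ddist_triangle K _ _ _
        _ ≤ ENNReal.ofReal (e/2) + ENNReal.ofReal (e/2) :=
            add_le_add (hγa δ (htr _ _ _ hc1 hδ)).le (h48 ▸ hwδ)
        _ = ENNReal.ofReal e := hsum
    · calc ddist K (jj wb) (jj w)
          ≤ ddist K (jj wb) (jj (y δ)) + ddist K (jj (y δ)) (jj w) := ddist_triangle K _ _ _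
        _ ≤ ENNReal.ofReal (e/2) + ENNReal.ofReal (e/2) :=
            add_le_add (hγb δ (htr _ _ _ hc2 hδ)).le (h48 ▸ hwδ)
        _ = ENNReal.ofReal e := hsum
  obtain ⟨w0, hw0L, δ0, hδ0, hw0d⟩ :=
    core_construction K hK r y htr hdir hcauchy γ0 1 one_pos
  set J : Type := {w : X // w ∈ L} × {q : ℚ // 0 < q} with hJdef
  set R : J → J → Prop := fun Γ Δ => Δ.2.1 ≤ Γ.2.1 ∧
    ddist K (jj Γ.1.1) (jj Δ.1.1) ≤ ENNReal.ofReal ((Γ.2.1 : ℝ) - (Δ.2.1 : ℝ)) with hRdef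
  refine ⟨J, R, fun Γ => Γ.1.1, ⟨(⟨w0, hw0L⟩, ⟨1, one_pos⟩)⟩, ?_, ?_, ?_, ?_, ?_⟩
  · -- transitive
    rintro A B C ⟨h1, h2⟩ ⟨g1, g2⟩
    refine ⟨g1.trans h1, ?_⟩
    refine le_trans (ddist_triangle K _ (jj B.1.1) _) ?_
    refine le_trans (add_le_add h2 g2) ?_
    rw [← ENNReal.ofReal_add (sub_nonneg.2 (by exact_mod_cast h1))
      (sub_nonneg.2 (by exact_mod_cast g1))]
    refine ENNReal.ofReal_le_ofReal (le_of_eq (by ring))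
  · -- directed
    rintro A B
    set m : ℚ := min A.2.1 B.2.1 with hm
    have hm0 : 0 < m := lt_min A.2.2 B.2.2
    have hm0' : (0:ℝ) < (m:ℝ) := by exact_mod_cast hm0
    obtain ⟨w, hwL, hwa, hwb⟩ := hLdir A.1.1 A.1.2 B.1.1 B.1.2 ((m:ℝ)/2) (by linarith)
    have hmA : (m:ℝ) ≤ (A.2.1:ℝ) := by exact_mod_cast min_le_left _ _
    have hmB : (m:ℝ) ≤ (B.2.1:ℝ) := by exact_mod_cast min_le_right _ _
    have hcast : ((m/2 : ℚ):ℝ) = (m:ℝ)/2 := by push_cast; ring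
    refine ⟨(⟨w, hwL⟩, ⟨m/2, by positivity⟩), ⟨?_, ?_⟩, ⟨?_, ?_⟩⟩
    · calc (m/2 : ℚ) ≤ m := by linarith
        _ ≤ A.2.1 := min_le_left _ _
    · refine le_trans hwa (ENNReal.ofReal_le_ofReal ?_)
      rw [hcast]; linarith
    · calc (m/2 : ℚ) ≤ m := by linarith
        _ ≤ B.2.1 := min_le_right _ _
    · refine le_trans hwb (ENNReal.ofReal_le_ofReal ?_)
      rw [hcast]; linarith
  · -- dominating
    rintro Γ ε hε
    obtain ⟨q, hq0, hqε⟩ := exists_rat_pos_lt hε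
    set s : ℚ := min Γ.2.1 q with hs
    have hs0 : 0 < s := lt_min Γ.2.2 hq0
    refine ⟨(Γ.1, ⟨s, hs0⟩), ⟨min_le_left _ _, ?_⟩, ?_⟩
    · rw [ddist_self]
      exact zero_le
    · rintro Δ ⟨h1, h2⟩
      calc ddist K (jj Γ.1.1) (jj Δ.1.1) ≤ ENNReal.ofReal ((s:ℝ) - (Δ.2.1:ℝ)) := h2
        _ ≤ ENNReal.ofReal (q:ℝ) := ENNReal.ofReal_le_ofReal (by
            have e1 : (s:ℝ) ≤ (q:ℝ) := by exact_mod_cast min_le_right _ _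
            have e2 : (0:ℝ) < (Δ.2.1:ℝ) := by exact_mod_cast Δ.2.2
            linarith)
        _ < ε := hqε
  · -- upper conv
    intro c _
    have hupc := hup c (Set.mem_univ c)
    refine le_of_forall_lt_imp_le_of_dense fun t ht => ?_
    have ht' : t < liminfN r (fun γ => ddist K (jj (y γ)) c) := lt_of_lt_of_le ht hupc
    obtain ⟨μ, hμ⟩ := lt_iSup_iff.1 ht'
    refine ENNReal.le_of_forall_pos_le_add fun η hη _ => ?_
    have hη2 : (0:ℝ≥0∞) < (η:ℝ≥0∞)/2 :=
      ENNReal.div_pos (by exact_mod_cast hη.ne') (by norm_num)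
    obtain ⟨q, hq0, hqη⟩ := exists_rat_pos_lt hη2
    have hq0' : (0:ℝ) < (q:ℝ) := by exact_mod_cast hq0
    obtain ⟨w, hwL, δ, hδ, hwδ⟩ :=
      core_construction K hK r y htr hdir hcauchy μ ((q:ℝ)/8) (by linarith)
    have hwδ' : ddist K (jj (y δ)) (jj w) ≤ (η:ℝ≥0∞)/2 :=
      le_trans hwδ (le_trans (ENNReal.ofReal_le_ofReal (by linarith)) hqη.le)
    refine le_trans ?_ (add_le_add_left
      (le_iSup (fun Γ : J => ⨅ Δ, ⨅ _ : R Γ Δ, ddist K (jj Δ.1.1) c) (⟨w, hwL⟩, ⟨q, hq0⟩)) _)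
    have key : ∀ Δ : J, R (⟨w, hwL⟩, ⟨q, hq0⟩) Δ → t ≤ ddist K (jj Δ.1.1) c + (η:ℝ≥0∞) := by
      rintro Δ ⟨h1, h2⟩
      have hA : t < ddist K (jj (y δ)) c := lt_of_lt_of_le hμ (iInf₂_le δ hδ)
      have hB : ddist K (jj (y δ)) c ≤ ddist K (jj (y δ)) (jj w) +
          (ddist K (jj w) (jj Δ.1.1) + ddist K (jj Δ.1.1) c) := by
        refine le_trans (ddist_triangle K _ (jj w) _) ?_
        exact add_le_add_right (ddist_triangle K _ (jj Δ.1.1) _) _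
      have hC : ddist K (jj w) (jj Δ.1.1) ≤ (η:ℝ≥0∞)/2 := by
        refine le_trans h2 (le_trans (ENNReal.ofReal_le_ofReal ?_) hqη.le)
        have e2 : (0:ℝ) < (Δ.2.1:ℝ) := by exact_mod_cast Δ.2.2
        simp only []
        linarith
      calc t ≤ ddist K (jj (y δ)) c := hA.le
        _ ≤ (η:ℝ≥0∞)/2 + ((η:ℝ≥0∞)/2 + ddist K (jj Δ.1.1) c) :=
            le_trans hB (add_le_add hwδ' (add_le_add_left hC _))
        _ = ddist K (jj Δ.1.1) c + (η:ℝ≥0∞) := by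
            rw [← add_assoc, ENNReal.add_halves, add_comm]
    calc t ≤ ⨅ Δ, ⨅ _ : R (⟨w, hwL⟩, ⟨q, hq0⟩) Δ, (ddist K (jj Δ.1.1) c + (η:ℝ≥0∞)) :=
          le_iInf fun Δ => le_iInf fun hΔ => key Δ hΔ
      _ ≤ (⨅ Δ, ⨅ _ : R (⟨w, hwL⟩, ⟨q, hq0⟩) Δ, ddist K (jj Δ.1.1) c) + (η:ℝ≥0∞) := by
          rw [ENNReal.iInf_add]
          exact iInf_mono fun Δ => le_of_eq ENNReal.iInf_add.symm
  · -- lower conv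
    intro c _
    refine le_iSup_of_le (⟨w0, hw0L⟩, ⟨1, one_pos⟩) ?_
    refine le_iInf fun Δ => le_iInf fun _ => ?_
    have htri := ddist_triangle K c (jj Δ.1.1) x
    rwa [hLzero _ Δ.1.2, add_zero] at htri

end Main
/-- `X^C = X^D`: `x ∈ X**` is the `→^◦_◦`-limit of a `d`-Cauchy net with
terms in `X` iff it is the `→^◦_◦`-limit of a `d`-dominating net with terms in `X`. -/
theorem stmt9 (X : Type) [NormedAddCommGroup X] [NormedSpace ℝ X] [CompleteSpace X]
    (K : Set X) (hK : IsGoodCone X K) (x : Bidual X) :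
    (∃ (ι : Type) (r : ι → ι → Prop) (y : ι → X),
      Nonempty ι ∧ TransRel r ∧ DirRel r ∧
      DCauchyN r (ddist K) (fun i => NormedSpace.inclusionInDoubleDual ℝ X (y i)) ∧
      BiConvOn r (ddist K) Set.univ
        (fun i => NormedSpace.inclusionInDoubleDual ℝ X (y i)) x) ↔
    (∃ (ι : Type) (r : ι → ι → Prop) (y : ι → X),
      Nonempty ι ∧ TransRel r ∧ DirRel r ∧
      DDomN r (ddist K) (fun i => NormedSpace.inclusionInDoubleDual ℝ X (y i)) ∧
      BiConvOn r (ddist K) Set.univ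
        (fun i => NormedSpace.inclusionInDoubleDual ℝ X (y i)) x) := by
  exact ⟨cauchy_to_dom K hK x, dom_to_cauchy K x⟩
end
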